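/- arXiv:1104.3533 — 4 statements merged into one kernel-verified Lean document; each statement's English description precedes it below -/
import Mathlib

section
/- Let x be a reduced expression for w ∈ W, factored as x = a (s) b with s ∈ S, let j = ℓ(a) + 1, let x' = a b be the expression obtained by deleting the j-th letter, and let w' be the product of x'. Let θ̄(x) = (θ_1, …, θ_{ℓ(w)}) be the root sequence of x. If d is the number of indices k with 1 ≤ k < j such that s_{θ_j}(θ_k) ∈ Φ⁻, then ℓ(w') = ℓ(w) − 2d − 1. In particular, x' is a reduced expression for w' if and only if s_{θ_j}(θ_k) ∈ Φ⁺ for every k with 1 ≤ k < j. -/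
/-!
Setup: a Coxeter system `cs : CoxeterSystem M W`, a real vector space `V` with a basis
`e : Module.Basis B ℝ V` of simple roots, a symmetric bilinear form `BF` with
`BF (e i) (e j) = -cos (π / M i j)` (the convention `M i j = 0` means `∞`, and division by
zero in `ℝ` gives `-cos 0 = -1`), and the geometric representation `ρ : W →* (V →ₗ[ℝ] V)`
determined by `ρ (s i) v = v - 2 ⟪α_i, v⟫ • α_i`.
-/

variable {B : Type*} {W : Type*} [Group W] {V : Type*} [AddCommGroup V] [Module ℝ V]

/-- The root system `Φ = {w • α_i}`. -/
def Phi (ρ : W →* V →ₗ[ℝ] V) (e : Module.Basis B ℝ V) : Set V :=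
  {v | ∃ (w : W) (i : B), v = ρ w (e i)}

/-- The positive system `Φ⁺`: roots that are nonnegative combinations of the simple roots. -/
def PhiPos (ρ : W →* V →ₗ[ℝ] V) (e : Module.Basis B ℝ V) : Set V :=
  {v | v ∈ Phi ρ e ∧ ∀ i : B, (0 : ℝ) ≤ e.repr v i}

/-- The negative system `Φ⁻ = -Φ⁺`. -/
def PhiNeg (ρ : W →* V →ₗ[ℝ] V) (e : Module.Basis B ℝ V) : Set V :=
  {v | -v ∈ PhiPos ρ e}

/-- The inversion set `Φ(w) = Φ⁺ ∩ w⁻¹ Φ⁻`. -/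
def InvSet (ρ : W →* V →ₗ[ℝ] V) (e : Module.Basis B ℝ V) (w : W) : Set V :=
  {v | v ∈ PhiPos ρ e ∧ ρ w v ∈ PhiNeg ρ e}

/-- The root sequence `θ̄(x)` of a word `x = (s_1, …, s_n)`:
`θ_k = s_n ⋯ s_{k+1} (α_{s_k})`. -/
noncomputable def rootSeq {M : CoxeterMatrix B} (cs : CoxeterSystem M W) (ρ : W →* V →ₗ[ℝ] V)
    (e : Module.Basis B ℝ V) : List B → List V
  | [] => []
  | i :: t => ρ (cs.wordProd t)⁻¹ (e i) :: rootSeq cs ρ e t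

/-- The data `(e, BF, ρ)` forms the geometric representation of the Coxeter system `cs`. -/
def IsGeometricRep {M : CoxeterMatrix B} (cs : CoxeterSystem M W) (e : Module.Basis B ℝ V)
    (BF : LinearMap.BilinForm ℝ V) (ρ : W →* V →ₗ[ℝ] V) : Prop :=
  (∀ u v : V, BF u v = BF v u) ∧
  (∀ i j : B, BF (e i) (e j) = - Real.cos (Real.pi / (M i j : ℝ))) ∧
  (∀ (i : B) (v : V), ρ (cs.simple i) v = v - (2 * BF (e i) v) • e i)


/-- The reflection `s_α` in a root `α`, acting on `V` by `s_α(v) = v - 2 B(v,α) α`. -/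
def reflVec (BF : LinearMap.BilinForm ℝ V) (α v : V) : V :=
  v - (2 * BF v α) • α



open Real

/-- `chebU m k = sin(kπ/m)/sin(π/m)`, with the convention `chebU 0 k = k`. -/
noncomputable def chebU (m : ℕ) (k : ℕ) : ℝ :=
  if m = 0 then k else Real.sin (k * (Real.pi / m)) / Real.sin (Real.pi / m)

theorem chebU_zero (m : ℕ) : chebU m 0 = 0 := by
  unfold chebU
  split <;> simp

theorem chebU_one {m : ℕ} (hm : m ≠ 1) : chebU m 1 = 1 := by
  unfold chebU
  split
  · simp
  · rename_i h
    rw [Nat.cast_one, one_mul, div_self]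
    have hm2 : 2 ≤ m := by omega
    have h0 : 0 < Real.pi / m := by positivity
    have hm2' : (2:ℝ) ≤ m := by exact_mod_cast hm2
    have h1 : Real.pi / m < Real.pi := by
      rw [div_lt_iff₀ (by positivity)]
      nlinarith [Real.pi_pos]
    exact ne_of_gt (Real.sin_pos_of_pos_of_lt_pi h0 h1)

theorem chebU_nonneg {m k : ℕ} (h : k ≤ m ∨ m = 0) : 0 ≤ chebU m k := by
  unfold chebU
  split
  · positivity
  · rename_i hm
    replace h : k ≤ m := by tauto
    have hmpos : (0:ℝ) < m := by exact_mod_cast Nat.pos_of_ne_zero hm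
    apply div_nonneg
    · apply Real.sin_nonneg_of_nonneg_of_le_pi
      · positivity
      · have hk : (k:ℝ) ≤ m := by exact_mod_cast h
        have hmp : (m:ℝ) * (Real.pi / m) = Real.pi := by field_simp
        calc (k:ℝ) * (Real.pi / m) ≤ (m:ℝ) * (Real.pi / m) :=
              mul_le_mul_of_nonneg_right hk (by positivity)
          _ = Real.pi := hmp
    · apply Real.sin_nonneg_of_nonneg_of_le_pi
      · positivity
      · have hm1 : (1:ℝ) ≤ m := by exact_mod_cast Nat.pos_of_ne_zero hm
        rw [div_le_iff₀ hmpos]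
        nlinarith [Real.pi_pos]

theorem chebU_rec (m k : ℕ) :
    chebU m (k + 2) = 2 * Real.cos (Real.pi / m) * chebU m (k + 1) - chebU m k := by
  unfold chebU
  split
  · rename_i h
    subst h
    rw [Nat.cast_zero, div_zero, Real.cos_zero]
    push_cast
    ring
  · set θ := Real.pi / m
    have h2 : ((k:ℝ) + 2) * θ = ((k + 1) * θ) + θ := by ring
    have h0 : (k:ℝ) * θ = ((k + 1) * θ) - θ := by ring
    push_cast
    rw [h2, h0, Real.sin_add, Real.sin_sub]
    ring_nf

open CoxeterSystem

variable {M : CoxeterMatrix B} (cs : CoxeterSystem M W) (e : Module.Basis B ℝ V)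
    (BF : LinearMap.BilinForm ℝ V) (ρ : W →* V →ₗ[ℝ] V)

theorem BF_diag (hgeo : IsGeometricRep cs e BF ρ) (i : B) : BF (e i) (e i) = 1 := by
  have h := hgeo.2.1 i i
  rw [M.diagonal i, Nat.cast_one, div_one, Real.cos_pi] at h
  rw [h]; norm_num

theorem rho_apply_mul (w₁ w₂ : W) (v : V) : ρ (w₁ * w₂) v = ρ w₁ (ρ w₂ v) := by
  rw [map_mul, Module.End.mul_apply]

theorem rho_inv_apply (w : W) (v : V) : ρ w (ρ w⁻¹ v) = v := by
  rw [← rho_apply_mul, mul_inv_cancel, map_one, Module.End.one_apply]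

theorem rho_simple_self (hgeo : IsGeometricRep cs e BF ρ) (i : B) :
    ρ (cs.simple i) (e i) = -(e i) := by
  rw [hgeo.2.2, BF_diag cs e BF ρ hgeo]
  module

theorem BF_invariant (hgeo : IsGeometricRep cs e BF ρ) (w : W) :
    ∀ u v : V, BF (ρ w u) (ρ w v) = BF u v := by
  induction w using cs.simple_induction with
  | simple i =>
    intro u v
    rw [hgeo.2.2, hgeo.2.2]
    simp only [map_sub, map_smul, LinearMap.sub_apply, LinearMap.smul_apply, smul_eq_mul,
      BF_diag cs e BF ρ hgeo]
    rw [hgeo.1 u (e i)]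
    ring
  | one => intro u v; simp
  | mul w₁ w₂ h₁ h₂ =>
    intro u v
    rw [map_mul, Module.End.mul_apply, Module.End.mul_apply, h₁, h₂]

theorem reflVec_rho (hgeo : IsGeometricRep cs e BF ρ) (u : W) (i : B) (v : V) :
    reflVec BF (ρ u (e i)) v = ρ (u * cs.simple i * u⁻¹) v := by
  have h1 : BF (ρ u (e i)) v = BF (e i) (ρ u⁻¹ v) := by
    conv_lhs => rw [← rho_inv_apply ρ u v]
    rw [BF_invariant cs e BF ρ hgeo u (e i) (ρ u⁻¹ v)]
  rw [rho_apply_mul, rho_apply_mul, hgeo.2.2, map_sub, map_smul, rho_inv_apply]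
  unfold reflVec
  rw [hgeo.1 v (ρ u (e i)), h1]

theorem alt_apply (hgeo : IsGeometricRep cs e BF ρ) (a t : B) (hat : a ≠ t) (j : ℕ) :
    ρ (cs.wordProd (CoxeterSystem.alternatingWord a t j)) (e a)
      = (if Even j then chebU (M a t) (j+1) else chebU (M a t) j) • e a
        + (if Even j then chebU (M a t) j else chebU (M a t) (j+1)) • e t := by
  have hm1 : M a t ≠ 1 := M.off_diagonal a t hat
  have hta : BF (e t) (e a) = - Real.cos (Real.pi / (M a t : ℝ)) := by
    rw [hgeo.2.1 t a, M.symmetric t a]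
  have hat' : BF (e a) (e t) = - Real.cos (Real.pi / (M a t : ℝ)) := hgeo.2.1 a t
  induction j with
  | zero =>
    simp only [Even.zero, if_true, zero_add, chebU_one hm1, chebU_zero, one_smul, zero_smul,
      add_zero]
    rw [show CoxeterSystem.alternatingWord a t 0 = [] from rfl, cs.wordProd_nil, map_one,
      Module.End.one_apply]
  | succ j ih =>
    rw [CoxeterSystem.alternatingWord_succ', cs.wordProd_cons, rho_apply_mul, ih]
    rcases Nat.even_or_odd j with hev | hodd
    · have hev' : ¬ Even (j + 1) := by simp [Nat.even_add_one, hev]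
      simp only [hev, if_true, hev', if_false]
      rw [hgeo.2.2]
      simp only [map_add, map_smul, smul_eq_mul, hta, BF_diag cs e BF ρ hgeo t]
      rw [chebU_rec]
      module
    · have hev : ¬ Even j := Nat.not_even_iff_odd.mpr hodd
      have hev' : Even (j + 1) := Nat.even_add_one.mpr hev
      simp only [hev, if_false, hev', if_true]
      rw [hgeo.2.2]
      simp only [map_add, map_smul, smul_eq_mul, hat', BF_diag cs e BF ρ hgeo a]
      rw [chebU_rec]
      module

theorem mem_phi (w : W) (i : B) : ρ w (e i) ∈ Phi ρ e := ⟨w, i, rfl⟩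

theorem inner_strip (hgeo : IsGeometricRep cs e BF ρ) {L : ℕ}
    (IH : ∀ v : W, cs.length v < L → ∀ b : B,
      cs.length (v * cs.simple b) = cs.length v + 1 → ρ v (e b) ∈ PhiPos ρ e)
    (a t : B) (hat : a ≠ t) :
    ∀ n (v : W) (j : ℕ), cs.length v = n → 1 ≤ j → (j ≤ M a t ∨ M a t = 0) →
      cs.length v + j = L →
      cs.length (v * cs.simple (if Even j then a else t)) = cs.length v + 1 →
      cs.length (v * cs.wordProd (CoxeterSystem.alternatingWord a t j) * cs.simple a) = L + 1 →
      ρ (v * cs.wordProd (CoxeterSystem.alternatingWord a t j)) (e a) ∈ PhiPos ρ e := by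
  intro n
  induction n using Nat.strong_induction_on with
  | _ n inner_ih =>
  intro v j hn hj1 hjm hL hinv hwa
  by_cases hbraid : j = M a t
  · exfalso
    have hm1 : 1 ≤ M a t := hbraid ▸ hj1
    obtain ⟨m', hm'⟩ : ∃ m', M a t = m' + 1 := ⟨M a t - 1, by omega⟩
    have hb := cs.prod_alternatingWord_eq_prod_alternatingWord_sub a t (M a t) (by omega)
    have h2 : M a t * 2 - M a t = M a t := by omega
    rw [h2] at hb
    have hc : CoxeterSystem.alternatingWord t a (M a t)
        = (CoxeterSystem.alternatingWord a t m').concat a := by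
      rw [hm', CoxeterSystem.alternatingWord_succ]
    rw [hbraid, hb, hc, cs.wordProd_concat, ← mul_assoc, cs.simple_mul_simple_cancel_right] at hwa
    have hle1 := cs.length_mul_le v (cs.wordProd (CoxeterSystem.alternatingWord a t m'))
    have hle2 := cs.length_wordProd_le (CoxeterSystem.alternatingWord a t m')
    rw [CoxeterSystem.length_alternatingWord] at hle2
    omega
  · have hjm' : j + 1 ≤ M a t ∨ M a t = 0 := by omega
    set c : B := if Even j then t else a with hc
    rcases cs.length_mul_simple v c with hup | hdown
    · -- stop case
      have hva : cs.length (v * cs.simple a) = cs.length v + 1 := by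
        by_cases hev : Even j
        · simpa [hev] using hinv
        · simpa [hc, hev] using hup
      have hvt : cs.length (v * cs.simple t) = cs.length v + 1 := by
        by_cases hev : Even j
        · simpa [hc, hev] using hup
        · simpa [hev] using hinv
      have hpa := IH v (by omega) a hva
      have hpt := IH v (by omega) t hvt
      refine ⟨mem_phi e ρ _ a, ?_⟩
      intro i
      rw [rho_apply_mul, alt_apply cs e BF ρ hgeo a t hat j]
      have hP : 0 ≤ chebU (M a t) (j+1) := chebU_nonneg (by omega)
      have hQ : 0 ≤ chebU (M a t) j := chebU_nonneg (by omega)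
      have h1 := hpa.2 i
      have h2 := hpt.2 i
      by_cases hev : Even j <;>
        simp only [hev, if_true, if_false, map_add, map_smul, Finsupp.add_apply,
          Finsupp.smul_apply, smul_eq_mul] <;>
        first
          | exact add_nonneg (mul_nonneg hP h1) (mul_nonneg hQ h2)
          | exact add_nonneg (mul_nonneg hQ h1) (mul_nonneg hP h2)
    · -- descent: recurse
      have hstep : v * cs.simple c * cs.wordProd (CoxeterSystem.alternatingWord a t (j+1))
          = v * cs.wordProd (CoxeterSystem.alternatingWord a t j) := by
        rw [CoxeterSystem.alternatingWord_succ', cs.wordProd_cons, ← hc, mul_assoc,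
          cs.simple_mul_simple_cancel_left]
      rw [← hstep]
      refine inner_ih (cs.length (v * cs.simple c)) (by omega) (v * cs.simple c) (j+1) rfl
        (by omega) hjm' (by omega) ?_ ?_
      · have hl : (if Even (j+1) then a else t) = c := by
          rcases Nat.even_or_odd j with h | h
          · simp [hc, h, Nat.even_add_one]
          · simp [hc, Nat.not_even_iff_odd.mpr h, Nat.even_add_one]
        rw [hl, mul_assoc, cs.simple_mul_simple_self, mul_one]
        omega
      · rw [hstep]
        exact hwa

theorem root_pos (hgeo : IsGeometricRep cs e BF ρ) :
    ∀ (L : ℕ) (w : W), cs.length w = L → ∀ a : B,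
      cs.length (w * cs.simple a) = cs.length w + 1 → ρ w (e a) ∈ PhiPos ρ e := by
  intro L
  induction L using Nat.strong_induction_on with
  | _ L IH =>
  intro w hL a ha
  by_cases hw1 : w = 1
  · subst hw1
    refine ⟨mem_phi e ρ 1 a, ?_⟩
    intro i
    classical
    rw [map_one, Module.End.one_apply, Module.Basis.repr_self, Finsupp.single_apply]
    split <;> norm_num
  · obtain ⟨t, ht⟩ := cs.exists_rightDescent_of_ne_one hw1
    rw [cs.isRightDescent_iff] at ht
    have hat : a ≠ t := by
      intro h
      rw [h] at ha
      omega
    have IH' : ∀ v : W, cs.length v < L → ∀ b : B,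
        cs.length (v * cs.simple b) = cs.length v + 1 → ρ v (e b) ∈ PhiPos ρ e := by
      intro v hv b hb
      exact IH (cs.length v) (by omega) v rfl b hb
    have h1 : cs.wordProd (CoxeterSystem.alternatingWord a t 1) = cs.simple t := by
      rw [show CoxeterSystem.alternatingWord a t 1 = [t] from rfl, cs.wordProd_singleton]
    have hwv : w * cs.simple t * cs.wordProd (CoxeterSystem.alternatingWord a t 1) = w := by
      rw [h1, cs.simple_mul_simple_cancel_right]
    have := inner_strip cs e BF ρ hgeo IH' a t hat (cs.length (w * cs.simple t))
      (w * cs.simple t) 1 rfl le_rfl (by omega)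
      (by omega)
      (by rw [if_neg (by decide : ¬ Even 1), mul_assoc, cs.simple_mul_simple_self, mul_one]
          omega)
      (by rw [hwv]; omega)
    rwa [hwv] at this

theorem root_neg (hgeo : IsGeometricRep cs e BF ρ) (w : W) (a : B)
    (h : cs.length (w * cs.simple a) + 1 = cs.length w) : ρ w (e a) ∈ PhiNeg ρ e := by
  show -(ρ w (e a)) ∈ PhiPos ρ e
  have hneg : -(ρ w (e a)) = ρ (w * cs.simple a) (e a) := by
    rw [rho_apply_mul, rho_simple_self cs e BF ρ hgeo, map_neg]
  rw [hneg]
  exact root_pos cs e BF ρ hgeo (cs.length (w * cs.simple a)) (w * cs.simple a) rfl a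
    (by rw [cs.simple_mul_simple_cancel_right]; omega)

theorem root_pos_or_neg (hgeo : IsGeometricRep cs e BF ρ) (w : W) (a : B) :
    ρ w (e a) ∈ PhiPos ρ e ∨ ρ w (e a) ∈ PhiNeg ρ e := by
  rcases cs.length_mul_simple w a with h | h
  · exact Or.inl (root_pos cs e BF ρ hgeo (cs.length w) w rfl a h)
  · exact Or.inr (root_neg cs e BF ρ hgeo w a h)

theorem pos_neg_disjoint (hgeo : IsGeometricRep cs e BF ρ) (v : V)
    (h1 : v ∈ PhiPos ρ e) (h2 : v ∈ PhiNeg ρ e) : False := by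
  obtain ⟨⟨w, i, rfl⟩, hpos⟩ := h1
  obtain ⟨_, hneg⟩ := h2
  have hzero : ∀ j : B, e.repr (ρ w (e i)) j = 0 := by
    intro j
    have ha := hpos j
    have hb := hneg j
    rw [map_neg, Finsupp.neg_apply] at hb
    linarith
  have hv0 : ρ w (e i) = 0 := by
    have : e.repr (ρ w (e i)) = 0 := Finsupp.ext hzero
    have := congrArg e.repr.symm this
    rwa [LinearEquiv.symm_apply_apply, map_zero] at this
  have : e i = 0 := by
    have := congrArg (ρ w⁻¹) hv0
    rwa [← rho_apply_mul, inv_mul_cancel, map_one, Module.End.one_apply, map_zero] at this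
  exact e.ne_zero i this

theorem length_rootSeq : ∀ ω : List B, (rootSeq cs ρ e ω).length = ω.length := by
  intro ω
  induction ω with
  | nil => rfl
  | cons i ω ih => simp [rootSeq, ih]

theorem mem_rootSeq : ∀ (ω : List B) (v : V), v ∈ rootSeq cs ρ e ω →
    ∃ (u : W) (i : B), v = ρ u (e i) := by
  intro ω
  induction ω with
  | nil => intro v hv; simp [rootSeq] at hv
  | cons i ω ih =>
    intro v hv
    rcases List.mem_cons.mp hv with h | h
    · exact ⟨(cs.wordProd ω)⁻¹, i, h⟩
    · exact ih v h

theorem rootSeq_append : ∀ (l ω : List B),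
    rootSeq cs ρ e (l ++ ω) = (rootSeq cs ρ e l).map (ρ (cs.wordProd ω)⁻¹) ++ rootSeq cs ρ e ω := by
  intro l ω
  induction l with
  | nil => simp [rootSeq]
  | cons i l ih =>
    show rootSeq cs ρ e (i :: (l ++ ω)) = _
    rw [rootSeq, ih]
    simp only [rootSeq, List.map_cons, List.cons_append]
    congr 1
    rw [cs.wordProd_append, mul_inv_rev, rho_apply_mul]

theorem rootSeq_mem_pos (hgeo : IsGeometricRep cs e BF ρ) :
    ∀ ω : List B, cs.IsReduced ω → ∀ v ∈ rootSeq cs ρ e ω, v ∈ PhiPos ρ e := by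
  intro ω
  induction ω with
  | nil => intro _ v hv; simp [rootSeq] at hv
  | cons i ω ih =>
    intro hred v hv
    have htail : cs.IsReduced ω := by
      have := CoxeterSystem.IsReduced.drop hred 1
      simpa using this
    rcases List.mem_cons.mp hv with h | h
    · subst h
      have hlen : cs.length (cs.simple i * cs.wordProd ω) = cs.length (cs.wordProd ω) + 1 := by
        have h1 : cs.length (cs.wordProd (i :: ω)) = (i :: ω).length := hred
        rw [cs.wordProd_cons] at h1
        have h2 : cs.length (cs.wordProd ω) = ω.length := htail
        simp only [List.length_cons] at h1
        omega
      apply root_pos cs e BF ρ hgeo (cs.length (cs.wordProd ω)⁻¹) (cs.wordProd ω)⁻¹ rfl i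
      have heq : (cs.wordProd ω)⁻¹ * cs.simple i = (cs.simple i * cs.wordProd ω)⁻¹ := by
        rw [mul_inv_rev, cs.inv_simple]
      rw [heq, cs.length_inv, cs.length_inv, hlen]
    · exact ih htail v h

open scoped Classical in
theorem word_length_count (hgeo : IsGeometricRep cs e BF ρ) :
    ∀ ω : List B, ω.length = cs.length (cs.wordProd ω)
      + 2 * (rootSeq cs ρ e ω).countP (fun v => decide (v ∈ PhiNeg ρ e)) := by
  intro ω
  induction ω with
  | nil => simp [rootSeq]
  | cons i ω ih =>
    rw [cs.wordProd_cons]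
    show (i :: ω).length = _ + 2 * List.countP _ (ρ (cs.wordProd ω)⁻¹ (e i) :: rootSeq cs ρ e ω)
    rw [List.countP_cons]
    rcases cs.length_simple_mul (cs.wordProd ω) i with h | h
    · have hpos : ρ (cs.wordProd ω)⁻¹ (e i) ∈ PhiPos ρ e := by
        apply root_pos cs e BF ρ hgeo (cs.length (cs.wordProd ω)⁻¹) _ rfl i
        rw [show (cs.wordProd ω)⁻¹ * cs.simple i = (cs.simple i * cs.wordProd ω)⁻¹ by
          rw [mul_inv_rev, cs.inv_simple], cs.length_inv, cs.length_inv, h]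
      have hfalse : (decide (ρ (cs.wordProd ω)⁻¹ (e i) ∈ PhiNeg ρ e)) = false := by
        apply decide_eq_false
        exact fun hneg => pos_neg_disjoint cs e BF ρ hgeo _ hpos hneg
      rw [hfalse]
      simp only [List.length_cons, Bool.false_eq_true, if_false, add_zero]
      omega
    · have hneg : ρ (cs.wordProd ω)⁻¹ (e i) ∈ PhiNeg ρ e := by
        apply root_neg cs e BF ρ hgeo
        rw [show (cs.wordProd ω)⁻¹ * cs.simple i = (cs.simple i * cs.wordProd ω)⁻¹ by
          rw [mul_inv_rev, cs.inv_simple], cs.length_inv, cs.length_inv, h]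
      have htrue : (decide (ρ (cs.wordProd ω)⁻¹ (e i) ∈ PhiNeg ρ e)) = true :=
        decide_eq_true hneg
      rw [htrue]
      simp only [List.length_cons, if_true]
      omega

open scoped Classical in
/-- Let `x = a (s) b` be a reduced expression for `w`, `j = ℓ(a) + 1`,
`x' = a b` (the `j`-th letter deleted) and `w' = φ(x')`. If `d` is the number of indices
`1 ≤ k < j` with `s_{θ_j}(θ_k) ∈ Φ⁻`, then `ℓ(w') = ℓ(w) − 2d − 1`; in particular `x'` is
reduced iff `s_{θ_j}(θ_k) ∈ Φ⁺` for all `1 ≤ k < j`. -/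
theorem length_delete_eq
    {M : CoxeterMatrix B} (cs : CoxeterSystem M W) (e : Module.Basis B ℝ V)
    (BF : LinearMap.BilinForm ℝ V) (ρ : W →* V →ₗ[ℝ] V)
    (hgeo : IsGeometricRep cs e BF ρ)
    (l₁ l₂ : List B) (s : B) (w : W)
    (hred : cs.IsReduced (l₁ ++ s :: l₂)) (hw : cs.wordProd (l₁ ++ s :: l₂) = w)
    (θj : V) (hθj : θj = (rootSeq cs ρ e (l₁ ++ s :: l₂)).getD l₁.length 0)
    (w' : W) (hw' : cs.wordProd (l₁ ++ l₂) = w')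
    (d : ℕ)
    (hd : d = ((rootSeq cs ρ e (l₁ ++ s :: l₂)).take l₁.length).countP
        (fun v => decide (reflVec BF θj v ∈ PhiNeg ρ e))) :
    cs.length w = cs.length w' + 2 * d + 1 ∧
      (cs.IsReduced (l₁ ++ l₂) ↔
        ∀ v ∈ (rootSeq cs ρ e (l₁ ++ s :: l₂)).take l₁.length,
          reflVec BF θj v ∈ PhiPos ρ e) := by
  set n₁ := l₁.length with hn₁
  set A : List V := (rootSeq cs ρ e l₁).map (ρ (cs.wordProd (s :: l₂))⁻¹) with hA
  set A' : List V := (rootSeq cs ρ e l₁).map (ρ (cs.wordProd l₂)⁻¹) with hA'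
  have h_xsplit : rootSeq cs ρ e (l₁ ++ s :: l₂) = A ++ rootSeq cs ρ e (s :: l₂) :=
    rootSeq_append cs e ρ l₁ (s :: l₂)
  have h_ysplit : rootSeq cs ρ e (l₁ ++ l₂) = A' ++ rootSeq cs ρ e l₂ :=
    rootSeq_append cs e ρ l₁ l₂
  have hAlen : A.length = n₁ := by
    rw [hA, List.length_map, length_rootSeq]
  have hθ : θj = ρ (cs.wordProd l₂)⁻¹ (e s) := by
    rw [hθj, h_xsplit, List.getD_append_right _ _ _ _ (le_of_eq hAlen), hAlen,
      Nat.sub_self]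
    show (rootSeq cs ρ e (s :: l₂)).getD 0 0 = _
    rw [rootSeq, List.getD_cons_zero]
  have htake : (rootSeq cs ρ e (l₁ ++ s :: l₂)).take n₁ = A := by
    rw [h_xsplit]
    exact List.take_left' hAlen
  have hrefl : ∀ v0 : V, reflVec BF θj (ρ (cs.wordProd (s :: l₂))⁻¹ v0)
      = ρ (cs.wordProd l₂)⁻¹ v0 := by
    intro v0
    rw [hθ, reflVec_rho cs e BF ρ hgeo, ← rho_apply_mul, cs.wordProd_cons]
    congr 1
    group
  have hmapA : A.map (reflVec BF θj) = A' := by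
    rw [hA, hA', List.map_map]
    exact List.map_congr_left (fun v0 _ => hrefl v0)
  have hd2 : d = A'.countP (fun v => decide (v ∈ PhiNeg ρ e)) := by
    rw [hd, htake, ← hmapA]
    conv_rhs => rw [List.countP_map]
    rfl
  have hcl₂ : (rootSeq cs ρ e l₂).countP (fun v => decide (v ∈ PhiNeg ρ e)) = 0 := by
    rw [List.countP_eq_zero]
    intro v hv
    have hredl₂ : cs.IsReduced l₂ := by
      have h1 : l₁ ++ s :: l₂ = (l₁ ++ [s]) ++ l₂ := by simp
      have h2 := CoxeterSystem.IsReduced.drop (h1 ▸ hred) (n₁ + 1)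
      rwa [List.drop_left' (by simp [hn₁])] at h2
    have hpos := rootSeq_mem_pos cs e BF ρ hgeo l₂ hredl₂ v hv
    simp only [decide_eq_true_eq]
    exact fun hneg => pos_neg_disjoint cs e BF ρ hgeo v hpos hneg
  have hcy := word_length_count cs e BF ρ hgeo (l₁ ++ l₂)
  rw [h_ysplit, List.countP_append, hcl₂, add_zero, hw', List.length_append] at hcy
  have hlenw : cs.length w = n₁ + 1 + l₂.length := by
    rw [← hw]
    have := hred
    unfold CoxeterSystem.IsReduced at this
    rw [this]
    simp only [List.length_append, List.length_cons]
    omega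
  have hroot : ∀ v' ∈ A', ∃ (u : W) (i : B), v' = ρ u (e i) := by
    intro v' hv'
    obtain ⟨v0, hv0, rfl⟩ := List.mem_map.mp hv'
    obtain ⟨u, i, rfl⟩ := mem_rootSeq cs e ρ l₁ v0 hv0
    exact ⟨(cs.wordProd l₂)⁻¹ * u, i, (rho_apply_mul ρ _ u (e i)).symm⟩
  constructor
  · omega
  · constructor
    · intro hyred v hv
      rw [htake] at hv
      have hyeq : cs.length w' = n₁ + l₂.length := by
        have := hyred
        unfold CoxeterSystem.IsReduced at this
        rw [hw'] at this
        rw [this]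
        simp only [List.length_append]
        rfl
      have hcA : A'.countP (fun v => decide (v ∈ PhiNeg ρ e)) = 0 := by omega
      have hv' : reflVec BF θj v ∈ A' := by
        rw [← hmapA]
        exact List.mem_map_of_mem hv
      have hnneg : ¬ (reflVec BF θj v ∈ PhiNeg ρ e) := by
        have := List.countP_eq_zero.mp hcA _ hv'
        simpa using this
      obtain ⟨u, i, hui⟩ := hroot _ hv'
      rw [hui] at hnneg ⊢
      exact (root_pos_or_neg cs e BF ρ hgeo u i).resolve_right hnneg
    · intro hall
      have hcA : A'.countP (fun v => decide (v ∈ PhiNeg ρ e)) = 0 := by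
        rw [List.countP_eq_zero]
        intro v' hv'
        have hv'' := hv'
        rw [← hmapA] at hv''
        obtain ⟨v0, hv0, rfl⟩ := List.mem_map.mp hv''
        have hpos := hall v0 (by rw [htake]; exact hv0)
        simp only [decide_eq_true_eq]
        exact fun hneg => pos_neg_disjoint cs e BF ρ hgeo _ hpos hneg
      show cs.length (cs.wordProd (l₁ ++ l₂)) = (l₁ ++ l₂).length
      rw [hw', List.length_append]
      omega
end

section
/- Let (W,S) be an arbitrary Coxeter system and let A ⊆ Φ⁺. Then A = Φ(w) for some w ∈ W if and only if A is finite and biconvex. -/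
/-!
Setup: a Coxeter system `cs : CoxeterSystem M W`, a real vector space `V` with a basis
`e : Module.Basis B ℝ V` of simple roots, a symmetric bilinear form `BF` with
`BF (e i) (e j) = -cos (π / M i j)` (the convention `M i j = 0` means `∞`, and division by
zero in `ℝ` gives `-cos 0 = -1`), and the geometric representation `ρ : W →* (V →ₗ[ℝ] V)`
determined by `ρ (s i) v = v - 2 ⟪α_i, v⟫ • α_i`.
-/

variable {B : Type*} {W : Type*} [Group W] {V : Type*} [AddCommGroup V] [Module ℝ V]

/-- A subset `Λ ⊆ Φ⁺` is convex if whenever `α, β ∈ Λ` and a positive root `λ` satisfies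
`λ = aα + bβ` with `a, b ≥ 0`, then `λ ∈ Λ`. -/
def ConvexRoots (ρ : W →* V →ₗ[ℝ] V) (e : Module.Basis B ℝ V) (Λ : Set V) : Prop :=
  ∀ α ∈ Λ, ∀ β ∈ Λ, ∀ lam ∈ PhiPos ρ e, ∀ a b : ℝ,
    0 ≤ a → 0 ≤ b → lam = a • α + b • β → lam ∈ Λ

/-- `Λ ⊆ Φ⁺` is biconvex if both `Λ` and `Φ⁺ \ Λ` are convex. -/
def BiconvexRoots (ρ : W →* V →ₗ[ℝ] V) (e : Module.Basis B ℝ V) (Λ : Set V) : Prop :=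
  ConvexRoots ρ e Λ ∧ ConvexRoots ρ e (PhiPos ρ e \ Λ)

namespace CoxAux

open CoxeterSystem

variable {M : CoxeterMatrix B} {cs : CoxeterSystem M W} {e : Module.Basis B ℝ V}
  {BF : LinearMap.BilinForm ℝ V} {ρ : W →* V →ₗ[ℝ] V}

/-! ### Basic lemmas about the geometric representation -/

lemma BF_diag (hgeo : IsGeometricRep cs e BF ρ) (i : B) : BF (e i) (e i) = 1 := by
  rw [hgeo.2.1 i i, M.diagonal i]
  norm_num

lemma rho_simple_self (hgeo : IsGeometricRep cs e BF ρ) (i : B) :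
    ρ (cs.simple i) (e i) = - e i := by
  rw [hgeo.2.2, BF_diag hgeo]
  module

lemma BF_simple_inv (hgeo : IsGeometricRep cs e BF ρ) (i : B) (u v : V) :
    BF (ρ (cs.simple i) u) (ρ (cs.simple i) v) = BF u v := by
  rw [hgeo.2.2, hgeo.2.2]
  have h1 : BF (e i) (e i) = 1 := BF_diag hgeo i
  have h2 : BF u (e i) = BF (e i) u := hgeo.1 u (e i)
  simp only [map_sub, map_smul, LinearMap.sub_apply, LinearMap.smul_apply, smul_eq_mul]
  rw [h1, h2]
  ring

lemma BF_inv (hgeo : IsGeometricRep cs e BF ρ) (w : W) (u v : V) :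
    BF (ρ w u) (ρ w v) = BF u v := by
  have key : ∀ w : W, ∀ u v : V, BF (ρ w u) (ρ w v) = BF u v := by
    intro w
    refine cs.simple_induction_left
      (p := fun w => ∀ u v : V, BF (ρ w u) (ρ w v) = BF u v) w
      (by intro u v; rw [map_one]; simp) ?_
    intro w' i hw u v
    rw [map_mul, Module.End.mul_apply, Module.End.mul_apply, BF_simple_inv hgeo, hw]
  exact key w u v

lemma phi_rho_mem (w : W) {v : V} (hv : v ∈ Phi ρ e) : ρ w v ∈ Phi ρ e := by
  obtain ⟨u, i, rfl⟩ := hv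
  exact ⟨w * u, i, by rw [map_mul, Module.End.mul_apply]⟩

lemma phi_neg_mem (hgeo : IsGeometricRep cs e BF ρ) {v : V} (hv : v ∈ Phi ρ e) :
    -v ∈ Phi ρ e := by
  obtain ⟨u, i, rfl⟩ := hv
  exact ⟨u * cs.simple i, i, by
    rw [map_mul, Module.End.mul_apply, rho_simple_self hgeo, map_neg]⟩

lemma root_norm (hgeo : IsGeometricRep cs e BF ρ) {v : V} (hv : v ∈ Phi ρ e) :
    BF v v = 1 := by
  obtain ⟨w, i, rfl⟩ := hv
  rw [BF_inv hgeo, BF_diag hgeo]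

lemma root_ne_zero (hgeo : IsGeometricRep cs e BF ρ) {v : V} (hv : v ∈ Phi ρ e) :
    v ≠ 0 := by
  intro h
  have h1 := root_norm hgeo hv
  rw [h] at h1
  simp at h1

lemma pos_neg_disj (hgeo : IsGeometricRep cs e BF ρ) {v : V}
    (h1 : v ∈ PhiPos ρ e) (h2 : v ∈ PhiNeg ρ e) : False := by
  have hv0 : e.repr v = 0 := by
    ext k
    have a := h1.2 k
    have b := h2.2 k
    rw [map_neg, Finsupp.neg_apply] at b
    simp only [Finsupp.coe_zero, Pi.zero_apply]
    linarith
  exact root_ne_zero hgeo h1.1 (by simpa using e.repr.map_eq_zero_iff.mp hv0)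

lemma simple_mem_pos (i : B) : e i ∈ PhiPos ρ e := by
  classical
  refine ⟨⟨1, i, by simp⟩, fun k => ?_⟩
  rw [e.repr_self, Finsupp.single_apply]
  split <;> norm_num

lemma neg_simple_not_pos (i : B) : -(e i) ∉ PhiPos ρ e := by
  classical
  intro h
  have := h.2 i
  rw [map_neg, Finsupp.neg_apply, e.repr_self, Finsupp.single_apply, if_pos rfl] at this
  linarith

lemma rho_simple_invol (i : B) (v : V) :
    ρ (cs.simple i) (ρ (cs.simple i) v) = v := by
  rw [← Module.End.mul_apply, ← map_mul, cs.simple_mul_simple_self, map_one, Module.End.one_apply]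

/-! ### Rank-2 computations -/

/-- `sig m k` is `sin (kπ/m) / sin (π/m)` (or `k` if `m = 0`). -/
noncomputable def sig (m : ℕ) (k : ℕ) : ℝ :=
  if m = 0 then k else Real.sin (k * (Real.pi / m)) / Real.sin (Real.pi / m)

lemma sin_pos_aux {m : ℕ} (hm : 2 ≤ m) : 0 < Real.sin (Real.pi / m) := by
  apply Real.sin_pos_of_pos_of_lt_pi
  · positivity
  · rw [div_lt_iff₀ (by positivity)]
    have h1 : (1:ℝ) < (m:ℝ) := by exact_mod_cast (by omega : 1 < m)
    nlinarith [Real.pi_pos, mul_lt_mul_of_pos_left h1 Real.pi_pos]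

lemma sig_zero (m : ℕ) : sig m 0 = 0 := by
  simp [sig]

lemma sig_one {m : ℕ} (hm : m ≠ 1) : sig m 1 = 1 := by
  rcases Nat.eq_zero_or_pos m with h0 | hpos
  · simp [sig, h0]
  · have h2 : 2 ≤ m := by omega
    have hs := sin_pos_aux h2
    rw [sig, if_neg (by omega)]
    rw [Nat.cast_one, one_mul, div_self (ne_of_gt hs)]

lemma sig_rec {m : ℕ} (hm : m ≠ 1) (k : ℕ) :
    sig m (k+2) = 2 * Real.cos (Real.pi / m) * sig m (k+1) - sig m k := by
  rcases Nat.eq_zero_or_pos m with h0 | hpos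
  · subst h0
    simp only [sig, if_pos rfl, Nat.cast_zero, div_zero, Real.cos_zero]
    push_cast
    ring
  · have h2 : 2 ≤ m := by omega
    simp only [sig, if_neg (by omega : m ≠ 0)]
    set θ := Real.pi / (m:ℝ) with hθ
    have key : Real.sin (((k:ℕ)+2 : ℕ) * θ)
        = 2 * Real.cos θ * Real.sin (((k:ℕ)+1 : ℕ) * θ) - Real.sin ((k:ℕ) * θ) := by
      push_cast
      have e1 : ((k:ℝ)+2) * θ = (((k:ℝ)+1) * θ) + θ := by ring
      have e2 : (k:ℝ) * θ = (((k:ℝ)+1) * θ) - θ := by ring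
      rw [e1, e2, Real.sin_add, Real.sin_sub]
      ring
    rw [key, sub_div, mul_div_assoc]

lemma sig_nonneg {m : ℕ} (hm : m ≠ 1) {k : ℕ} (hk : m = 0 ∨ k ≤ m) :
    0 ≤ sig m k := by
  rcases hk with h0 | hkm
  · subst h0
    simp only [sig, if_pos rfl]
    exact Nat.cast_nonneg k
  · rcases Nat.eq_zero_or_pos m with h0 | hpos
    · simp only [sig, if_pos h0]
      exact Nat.cast_nonneg k
    · have h2 : 2 ≤ m := by omega
      have hs := sin_pos_aux h2
      rw [sig, if_neg (by omega)]
      apply div_nonneg _ (le_of_lt hs)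
      apply Real.sin_nonneg_of_nonneg_of_le_pi
      · positivity
      · rw [← mul_div_assoc, div_le_iff₀ (by exact_mod_cast hpos : (0:ℝ) < (m:ℝ))]
        have : (k:ℝ) ≤ (m:ℝ) := by exact_mod_cast hkm
        nlinarith [Real.pi_pos]

lemma rho_alt (hgeo : IsGeometricRep cs e BF ρ) {i j : B} (hij : i ≠ j) (k : ℕ) :
    ρ (cs.wordProd (alternatingWord i j k)) (e i)
      = (if Even k then sig (M i j) (k+1) else sig (M i j) k) • e i
        + (if Even k then sig (M i j) k else sig (M i j) (k+1)) • e j := by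
  have hm : M i j ≠ 1 := M.off_diagonal i j hij
  have hBji : BF (e j) (e i) = - Real.cos (Real.pi / (M i j : ℝ)) := by
    rw [hgeo.2.1 j i, M.symmetric j i]
  have hBij : BF (e i) (e j) = - Real.cos (Real.pi / (M i j : ℝ)) := hgeo.2.1 i j
  have hBii : BF (e i) (e i) = 1 := BF_diag hgeo i
  have hBjj : BF (e j) (e j) = 1 := BF_diag hgeo j
  induction k with
  | zero =>
    rw [show alternatingWord i j 0 = [] from rfl, cs.wordProd_nil, map_one, Module.End.one_apply]
    simp [sig_zero, sig_one hm]
  | succ k ih =>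
    rw [alternatingWord_succ', cs.wordProd_cons, map_mul, Module.End.mul_apply, ih]
    by_cases hk : Even k
    · have hk1 : ¬ Even (k+1) := by simp [Nat.even_add_one, hk]
      simp only [if_pos hk, if_neg hk1]
      rw [hgeo.2.2 j]
      simp only [map_add, map_smul, smul_eq_mul, hBji, hBjj]
      rw [sig_rec hm k]
      module
    · have hk1 : Even (k+1) := by simp [Nat.even_add_one, hk]
      simp only [if_neg hk, if_pos hk1]
      rw [hgeo.2.2 i]
      simp only [map_add, map_smul, smul_eq_mul, hBij, hBii]
      rw [sig_rec hm k]
      module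

lemma rho_alt_pos (hgeo : IsGeometricRep cs e BF ρ) {i j : B} (hij : i ≠ j) (k : ℕ)
    (hk : M i j = 0 ∨ k < M i j) :
    ∃ a b : ℝ, 0 ≤ a ∧ 0 ≤ b ∧
      ρ (cs.wordProd (alternatingWord i j k)) (e i) = a • e i + b • e j := by
  have hm : M i j ≠ 1 := M.off_diagonal i j hij
  refine ⟨_, _, ?_, ?_, rho_alt hgeo hij k⟩
  · split <;> apply sig_nonneg hm <;> omega
  · split <;> apply sig_nonneg hm <;> omega

lemma mem_alt {i j : B} : ∀ k : ℕ, ∀ x ∈ alternatingWord i j k, x = i ∨ x = j := by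
  intro k
  induction k with
  | zero => simp [alternatingWord]
  | succ k ih =>
    intro x hx
    rw [alternatingWord_succ'] at hx
    rcases List.mem_cons.mp hx with h | h
    · subst h
      split <;> tauto
    · exact ih x h

lemma alt_append {i j : B} (a b : ℕ) :
    alternatingWord i j (a + b)
      = (if Even b then alternatingWord i j a else alternatingWord j i a)
        ++ alternatingWord i j b := by
  induction a with
  | zero => simp [alternatingWord]
  | succ a ih =>
    have hab : a + 1 + b = (a + b) + 1 := by omega
    rw [hab, alternatingWord_succ', ih]
    by_cases hb : Even b <;> by_cases ha : Even a <;>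
      simp [alternatingWord_succ', Nat.even_add, hb, ha, List.cons_append]

lemma cons_alt {p q x : B} (hpq : p ≠ q) (hx : x = p ∨ x = q) (k : ℕ) :
    ∃ k' ≤ k + 1,
      cs.wordProd (x :: alternatingWord p q k) = cs.wordProd (alternatingWord p q k')
      ∨ cs.wordProd (x :: alternatingWord p q k) = cs.wordProd (alternatingWord q p k') := by
  by_cases hc : x = (if Even k then q else p)
  · exact ⟨k+1, le_refl _, Or.inl (by rw [alternatingWord_succ', ← hc])⟩
  · match k with
    | 0 =>
      have hxp : x = p := by
        simp only [if_pos (Even.zero)] at hc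
        tauto
      refine ⟨1, by omega, Or.inr ?_⟩
      subst hxp
      rfl
    | (k''+1) =>
      have hxx : x = (if Even k'' then q else p) := by
        rcases hx with rfl | rfl <;> by_cases h : Even k'' <;>
          simp [Nat.even_add_one, h] at hc ⊢ <;> tauto
      refine ⟨k'', by omega, Or.inl ?_⟩
      conv_lhs => rw [alternatingWord_succ' p q k'', ← hxx]
      rw [cs.wordProd_cons, cs.wordProd_cons, ← mul_assoc,
        cs.simple_mul_simple_self, one_mul]

lemma word_to_alt {i j : B} (hij : i ≠ j) :
    ∀ ω : List B, (∀ x ∈ ω, x = i ∨ x = j) →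
      ∃ k ≤ ω.length,
        cs.wordProd ω = cs.wordProd (alternatingWord i j k)
        ∨ cs.wordProd ω = cs.wordProd (alternatingWord j i k) := by
  intro ω
  induction ω with
  | nil => exact fun _ => ⟨0, by omega, Or.inl rfl⟩
  | cons x ω' ih =>
    intro hmem
    obtain ⟨k, hk, hcase⟩ := ih (fun y hy => hmem y (List.mem_cons_of_mem _ hy))
    have hx := hmem x List.mem_cons_self
    have heqgen : ∀ τ : List B, cs.wordProd ω' = cs.wordProd τ →
        cs.wordProd (x :: ω') = cs.wordProd (x :: τ) := by
      intro τ hτ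
      rw [cs.wordProd_cons, cs.wordProd_cons, hτ]
    have hlen : (x :: ω').length = ω'.length + 1 := by simp
    rcases hcase with h | h
    · obtain ⟨k', hk', hc⟩ := cons_alt (cs := cs) hij hx k
      rcases hc with hc | hc
      · exact ⟨k', by omega, Or.inl ((heqgen _ h).trans hc)⟩
      · exact ⟨k', by omega, Or.inr ((heqgen _ h).trans hc)⟩
    · obtain ⟨k', hk', hc⟩ := cons_alt (cs := cs) (Ne.symm hij) hx.symm k
      rcases hc with hc | hc
      · exact ⟨k', by omega, Or.inr ((heqgen _ h).trans hc)⟩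
      · exact ⟨k', by omega, Or.inl ((heqgen _ h).trans hc)⟩

/-! ### The dichotomy theorem: roots are positive or negative -/

lemma pos_of_ascent (hgeo : IsGeometricRep cs e BF ρ) :
    ∀ n : ℕ, ∀ w : W, ∀ i : B, cs.length w = n →
      cs.length (w * cs.simple i) = n + 1 → ρ w (e i) ∈ PhiPos ρ e := by
  intro n
  induction n using Nat.strong_induction_on with
  | _ n IH =>
  intro w i hlen hasc
  rcases Nat.eq_zero_or_pos n with rfl | hn
  · have hw1 : w = 1 := cs.length_eq_zero_iff.mp hlen
    subst hw1
    rw [map_one, Module.End.one_apply]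
    exact simple_mem_pos i
  · have hw1 : w ≠ 1 := by
      intro h
      rw [h, cs.length_one] at hlen
      omega
    obtain ⟨j, hj⟩ := cs.exists_rightDescent_of_ne_one hw1
    have hdesc : cs.length (w * cs.simple j) + 1 = cs.length w :=
      (cs.isRightDescent_iff).mp hj
    have hij : i ≠ j := by
      intro h
      rw [← h] at hdesc
      omega
    classical
    -- minimize `ℓ v` over pairs `(v, ω)` with `w = v * π ω`, `ω` a word in `{i, j}`,
    -- and `ℓ v + |ω| = n`.
    set P : ℕ → Prop := fun nv => ∃ v : W, ∃ ω : List B,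
      cs.length v = nv ∧ (∀ x ∈ ω, x = i ∨ x = j) ∧ w = v * cs.wordProd ω ∧
      cs.length v + ω.length = n with hPdef
    have hPex : ∃ nv, P nv :=
      ⟨n, w, [], hlen, by simp, by rw [cs.wordProd_nil, mul_one], by simp [hlen]⟩
    obtain ⟨v, ω, hv_len, hωmem, hw_eq, hsum⟩ := Nat.find_spec hPex
    have hmin : ∀ m' < Nat.find hPex, ¬ P m' := fun m' => Nat.find_min hPex
    -- `v` is not shortened by `s i` or `s j`
    have hstep : ∀ x : B, (x = i ∨ x = j) →
        cs.length (v * cs.simple x) = cs.length v + 1 := by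
      intro x hx
      rcases cs.length_mul_simple v x with h | h
      · exact h
      · exfalso
        refine hmin (cs.length (v * cs.simple x)) (by omega)
          ⟨v * cs.simple x, x :: ω, rfl, ?_, ?_, ?_⟩
        · intro y hy
          rcases List.mem_cons.mp hy with rfl | hy
          · exact hx
          · exact hωmem y hy
        · rw [cs.wordProd_cons, ← mul_assoc, cs.simple_mul_simple_cancel_right, hw_eq]
        · simp only [List.length_cons]
          omega
    -- `ℓ v < n`
    have hvn : cs.length v < n := by
      have hP2 : P (cs.length (w * cs.simple j)) := by
        refine ⟨w * cs.simple j, [j], rfl, by simp, ?_, ?_⟩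
        · rw [cs.wordProd_singleton, cs.simple_mul_simple_cancel_right]
        · simp only [List.length_singleton]
          omega
      have := Nat.find_min' hPex hP2
      omega
    -- apply the induction hypothesis to `v`
    have hvPi := IH (cs.length v) hvn v i rfl (hstep i (Or.inl rfl))
    have hvPj := IH (cs.length v) hvn v j rfl (hstep j (Or.inr rfl))
    -- any `{i,j}`-word for `π ω * s i` has length at least `|ω| + 1`
    have hT : ∀ τ : List B, (∀ x ∈ τ, x = i ∨ x = j) →
        cs.wordProd τ = cs.wordProd ω * cs.simple i → ω.length + 1 ≤ τ.length := by
      intro τ hτ hτeq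
      have h1 : cs.length (w * cs.simple i) ≤ cs.length v + τ.length := by
        rw [hw_eq, mul_assoc, ← hτeq]
        calc cs.length (v * cs.wordProd τ)
            ≤ cs.length v + cs.length (cs.wordProd τ) := cs.length_mul_le _ _
          _ ≤ cs.length v + τ.length := by
              have := cs.length_wordProd_le τ
              omega
      omega
    -- put `π ω` into alternating form ending in `j`
    obtain ⟨k, hk_le, hform⟩ := word_to_alt (cs := cs) hij ω hωmem
    have hu : ∃ k ≤ ω.length, cs.wordProd ω = cs.wordProd (alternatingWord i j k) := by
      rcases hform with h | h
      · exact ⟨k, hk_le, h⟩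
      · match k, hk_le, h with
        | 0, hk_le, h => exact ⟨0, by omega, h⟩
        | (k''+1), hk_le, h =>
          exfalso
          have hsplit : alternatingWord j i (k''+1) = (alternatingWord i j k'').concat i :=
            alternatingWord_succ j i k''
          have : cs.wordProd (alternatingWord i j k'') = cs.wordProd ω * cs.simple i := by
            rw [h, hsplit, cs.wordProd_concat, cs.simple_mul_simple_cancel_right]
          have hlen := hT _ (mem_alt k'') this
          rw [length_alternatingWord] at hlen
          omega
    clear hform hk_le
    obtain ⟨k, hk_le, hu⟩ := hu
    -- the alternating word is short enough for the rank-2 positivity lemma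
    have hbound : M i j = 0 ∨ k < M i j := by
      by_contra hcon
      push_neg at hcon
      obtain ⟨hm0, hge⟩ := hcon
      have hm1 : M i j ≠ 1 := M.off_diagonal i j hij
      obtain ⟨a, rfl⟩ : ∃ a, k = a + M i j := ⟨k - M i j, by omega⟩
      obtain ⟨m', hm'⟩ : ∃ m', M i j = m' + 1 := ⟨M i j - 1, by omega⟩
      have hsplit := alt_append (i := i) (j := j) a (M i j)
      -- rewrite using the braid relation
      have hbraid : cs.wordProd (alternatingWord i j (M i j))
          = cs.wordProd (alternatingWord j i (M i j)) := by
        have := cs.wordProd_braidWord_eq i j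
        unfold CoxeterSystem.braidWord at this
        rwa [M.symmetric j i] at this
      set pre : List B :=
        (if Even (M i j) then alternatingWord i j a else alternatingWord j i a) with hpre
      have hτeq : cs.wordProd (pre ++ alternatingWord i j m') =
          cs.wordProd ω * cs.simple i := by
        rw [hu, hsplit, cs.wordProd_append, cs.wordProd_append, mul_assoc, hbraid, hm',
          alternatingWord_succ j i m', cs.wordProd_concat, cs.simple_mul_simple_cancel_right]
      have hτmem : ∀ x ∈ pre ++ alternatingWord i j m', x = i ∨ x = j := by
        intro x hx
        rcases List.mem_append.mp hx with hx | hx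
        · rw [hpre] at hx
          split at hx
          · exact mem_alt a x hx
          · exact (mem_alt a x hx).symm
        · exact mem_alt m' x hx
      have hlen := hT _ hτmem hτeq
      rw [List.length_append, length_alternatingWord] at hlen
      have hprelen : pre.length = a := by
        rw [hpre]
        split <;> exact length_alternatingWord _ _ a
      omega
    -- conclude
    obtain ⟨a, b, ha, hb, hrho⟩ := rho_alt_pos hgeo hij k hbound
    have hfinal : ρ w (e i) = a • ρ v (e i) + b • ρ v (e j) := by
      rw [hw_eq, map_mul, Module.End.mul_apply, hu, hrho, map_add, map_smul, map_smul]
    refine ⟨⟨w, i, rfl⟩, fun kk => ?_⟩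
    rw [hfinal]
    simp only [map_add, map_smul, Finsupp.add_apply, Finsupp.smul_apply, smul_eq_mul]
    exact add_nonneg (mul_nonneg ha (hvPi.2 kk)) (mul_nonneg hb (hvPj.2 kk))

lemma neg_of_descent (hgeo : IsGeometricRep cs e BF ρ) (w : W) (i : B)
    (h : cs.length (w * cs.simple i) + 1 = cs.length w) : ρ w (e i) ∈ PhiNeg ρ e := by
  have h2 : cs.length ((w * cs.simple i) * cs.simple i) = cs.length (w * cs.simple i) + 1 := by
    rw [cs.simple_mul_simple_cancel_right]
    omega
  have hpos := pos_of_ascent hgeo (cs.length (w * cs.simple i)) (w * cs.simple i) i rfl h2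
  have heq : ρ w (e i) = - ρ (w * cs.simple i) (e i) := by
    rw [map_mul, Module.End.mul_apply, rho_simple_self hgeo, map_neg, neg_neg]
  show - ρ w (e i) ∈ PhiPos ρ e
  rw [heq, neg_neg]
  exact hpos

lemma pos_or_neg_root (hgeo : IsGeometricRep cs e BF ρ) (w : W) (i : B) :
    ρ w (e i) ∈ PhiPos ρ e ∨ ρ w (e i) ∈ PhiNeg ρ e := by
  rcases cs.length_mul_simple w i with h | h
  · exact Or.inl (pos_of_ascent hgeo (cs.length w) w i rfl h)
  · exact Or.inr (neg_of_descent hgeo w i h)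

lemma root_dichotomy (hgeo : IsGeometricRep cs e BF ρ) {v : V} (hv : v ∈ Phi ρ e) :
    v ∈ PhiPos ρ e ∨ v ∈ PhiNeg ρ e := by
  obtain ⟨w, i, rfl⟩ := hv
  exact pos_or_neg_root hgeo w i

/-! ### The simple reflection permutes the other positive roots -/

lemma eq_simple_of_pos_neg (hgeo : IsGeometricRep cs e BF ρ) {i : B} {β : V}
    (hβ : β ∈ PhiPos ρ e) (hneg : ρ (cs.simple i) β ∈ PhiNeg ρ e) : β = e i := by
  classical
  have hcoords : ∀ k, k ≠ i → e.repr β k = 0 := by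
    intro k hk
    have h1 : 0 ≤ e.repr β k := hβ.2 k
    have h2 : 0 ≤ e.repr (- ρ (cs.simple i) β) k := hneg.2 k
    rw [hgeo.2.2] at h2
    rw [map_neg, map_sub, map_smul, Finsupp.neg_apply, Finsupp.sub_apply, Finsupp.smul_apply,
      e.repr_self, Finsupp.single_apply, if_neg (fun h => hk h.symm), smul_eq_mul,
      mul_zero, sub_zero] at h2
    linarith
  set r : ℝ := e.repr β i with hr
  have hrepr : e.repr β = Finsupp.single i r := by
    ext k
    by_cases hk : k = i
    · subst hk
      rw [Finsupp.single_apply, if_pos rfl]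
    · rw [hcoords k hk, Finsupp.single_apply, if_neg (fun h => hk h.symm)]
  have hβ_eq : β = r • e i := by
    calc β = e.repr.symm (e.repr β) := (e.repr.symm_apply_apply β).symm
      _ = e.repr.symm (Finsupp.single i r) := by rw [← hrepr]
      _ = r • e i := by
          rw [e.repr_symm_apply, Finsupp.linearCombination_single]
  have hnorm : BF β β = 1 := root_norm hgeo hβ.1
  rw [hβ_eq] at hnorm
  rw [map_smul, map_smul, LinearMap.smul_apply, smul_eq_mul, smul_eq_mul, BF_diag hgeo] at hnorm
  have hr_nonneg : 0 ≤ r := hβ.2 i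
  have hr1 : r = 1 := by nlinarith
  rw [hβ_eq, hr1, one_smul]

lemma simple_perm (hgeo : IsGeometricRep cs e BF ρ) {i : B} {β : V}
    (hβ : β ∈ PhiPos ρ e) (hne : β ≠ e i) : ρ (cs.simple i) β ∈ PhiPos ρ e := by
  rcases root_dichotomy hgeo (phi_rho_mem (cs.simple i) hβ.1) with h | h
  · exact h
  · exact absurd (eq_simple_of_pos_neg hgeo hβ h) hne

/-! ### Inversion sets: finiteness and biconvexity -/

lemma invSet_one' (hgeo : IsGeometricRep cs e BF ρ) : InvSet ρ e (1 : W) = (∅ : Set V) := by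
  ext v
  simp only [InvSet, Set.mem_setOf_eq, Set.mem_empty_iff_false, iff_false, not_and]
  intro h1 h2
  rw [map_one, Module.End.one_apply] at h2
  exact pos_neg_disj hgeo h1 h2

lemma invSet_finite (hgeo : IsGeometricRep cs e BF ρ) :
    ∀ n : ℕ, ∀ w : W, cs.length w = n → (InvSet ρ e w).Finite := by
  intro n
  induction n using Nat.strong_induction_on with
  | _ n IH =>
  intro w hlen
  rcases Nat.eq_zero_or_pos n with rfl | hn
  · have hw1 : w = 1 := cs.length_eq_zero_iff.mp hlen
    rw [hw1, invSet_one' hgeo]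
    exact Set.finite_empty
  · have hw1 : w ≠ 1 := by
      intro h
      rw [h, cs.length_one] at hlen
      omega
    obtain ⟨j, hj⟩ := cs.exists_rightDescent_of_ne_one hw1
    have hdesc : cs.length (w * cs.simple j) + 1 = cs.length w := (cs.isRightDescent_iff).mp hj
    set w' := w * cs.simple j with hw'
    have hw'len : cs.length w' < n := by omega
    have hww : w' * cs.simple j = w := cs.simple_mul_simple_cancel_right j
    have hsub : InvSet ρ e w ⊆ insert (e j) (ρ (cs.simple j) '' (InvSet ρ e w')) := by
      rintro α ⟨hα, hneg⟩
      by_cases hαj : α = e j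
      · exact Set.mem_insert_iff.mpr (Or.inl hαj)
      · refine Set.mem_insert_iff.mpr (Or.inr ⟨ρ (cs.simple j) α,
          ⟨simple_perm hgeo hα hαj, ?_⟩, rho_simple_invol j α⟩)
        have : ρ w' (ρ (cs.simple j) α) = ρ w α := by
          rw [← Module.End.mul_apply, ← map_mul, hww]
        rw [this]
        exact hneg
    exact Set.Finite.subset (Set.Finite.insert _
      (Set.Finite.image _ (IH (cs.length w') hw'len w' rfl))) hsub

lemma invSet_biconvex (hgeo : IsGeometricRep cs e BF ρ) (w : W) :
    BiconvexRoots ρ e (InvSet ρ e w) := by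
  constructor
  · rintro α ⟨hα, hαneg⟩ β ⟨hβ, hβneg⟩ lam hlam a b ha hb heq
    refine ⟨hlam, ?_⟩
    show - ρ w lam ∈ PhiPos ρ e
    have hcomb : - ρ w lam = a • (- ρ w α) + b • (- ρ w β) := by
      rw [heq, map_add, map_smul, map_smul]
      module
    refine ⟨?_, fun k => ?_⟩
    · exact phi_neg_mem hgeo (phi_rho_mem w hlam.1)
    · rw [hcomb]
      simp only [map_add, map_smul, Finsupp.add_apply, Finsupp.smul_apply, smul_eq_mul]
      exact add_nonneg (mul_nonneg ha (hαneg.2 k)) (mul_nonneg hb (hβneg.2 k))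
  · rintro α ⟨hαpos, hαni⟩ β ⟨hβpos, hβni⟩ lam hlam a b ha hb heq
    refine ⟨hlam, fun hmem => ?_⟩
    have hαwpos : ρ w α ∈ PhiPos ρ e := by
      rcases root_dichotomy hgeo (phi_rho_mem w hαpos.1) with h | h
      · exact h
      · exact absurd ⟨hαpos, h⟩ hαni
    have hβwpos : ρ w β ∈ PhiPos ρ e := by
      rcases root_dichotomy hgeo (phi_rho_mem w hβpos.1) with h | h
      · exact h
      · exact absurd ⟨hβpos, h⟩ hβni
    have hlampos : ρ w lam ∈ PhiPos ρ e := by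
      refine ⟨phi_rho_mem w hlam.1, fun k => ?_⟩
      rw [heq, map_add, map_smul, map_smul]
      simp only [map_add, map_smul, Finsupp.add_apply, Finsupp.smul_apply, smul_eq_mul]
      exact add_nonneg (mul_nonneg ha (hαwpos.2 k)) (mul_nonneg hb (hβwpos.2 k))
    exact pos_neg_disj hgeo hlampos hmem.2

/-! ### Finite biconvex sets are inversion sets -/

/-- The sum-of-coordinates functional. -/
noncomputable def coordSum (e : Module.Basis B ℝ V) : V →ₗ[ℝ] ℝ :=
  (Finsupp.lsum ℝ (fun _ : B => (LinearMap.id : ℝ →ₗ[ℝ] ℝ))).comp e.repr.toLinearMap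

lemma coordSum_simple (i : B) : coordSum e (e i) = 1 := by
  simp [coordSum]

lemma exists_BF_pos (hgeo : IsGeometricRep cs e BF ρ) {α : V} (hα : α ∈ PhiPos ρ e) :
    ∃ k, 0 < BF (e k) α := by
  by_contra hcon
  push_neg at hcon
  have h1 : BF α α = 1 := root_norm hgeo hα.1
  set L : V →ₗ[ℝ] ℝ := LinearMap.flip BF α with hLdef
  have hLe : ∀ u : V, L u = BF u α := fun u => rfl
  have hrepr := e.linearCombination_repr α
  have h2 : L α = ∑ k ∈ (e.repr α).support, (e.repr α) k * L (e k) := by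
    conv_lhs => rw [← hrepr]
    rw [Finsupp.linearCombination_apply, Finsupp.sum, map_sum]
    refine Finset.sum_congr rfl fun k _ => ?_
    rw [map_smul, smul_eq_mul]
  rw [hLe α, h1] at h2
  have h3 : (∑ k ∈ (e.repr α).support, (e.repr α) k * L (e k)) ≤ 0 :=
    Finset.sum_nonpos fun k _ => mul_nonpos_iff.mpr
      (Or.inl ⟨hα.2 k, by rw [hLe]; exact hcon k⟩)
  linarith

lemma exists_simple_mem (hgeo : IsGeometricRep cs e BF ρ) {A : Set V}
    (hsub : A ⊆ PhiPos ρ e) (hfin : A.Finite) (hne : A.Nonempty)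
    (hbi : BiconvexRoots ρ e A) : ∃ i, e i ∈ A := by
  by_contra hcon
  push_neg at hcon
  obtain ⟨α, hαA, hmin⟩ : ∃ α ∈ A, ∀ β ∈ A, coordSum e α ≤ coordSum e β := by
    obtain ⟨α, hα, hm⟩ := Finset.exists_min_image hfin.toFinset (coordSum e)
      (Set.Finite.toFinset_nonempty hfin |>.mpr hne)
    exact ⟨α, hfin.mem_toFinset.mp hα, fun β hβ => hm β (hfin.mem_toFinset.mpr hβ)⟩
  obtain ⟨k, hk⟩ := exists_BF_pos hgeo (hsub hαA)
  have hαk : α ≠ e k := fun h => hcon k (h ▸ hαA)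
  set β := ρ (cs.simple k) α with hβdef
  have hβpos : β ∈ PhiPos ρ e := simple_perm hgeo (hsub hαA) hαk
  have hdecomp : α = (1:ℝ) • β + (2 * BF (e k) α) • e k := by
    rw [hβdef, hgeo.2.2]
    module
  by_cases hβA : β ∈ A
  · have h1 := hmin β hβA
    have h2 : coordSum e β = coordSum e α - 2 * BF (e k) α := by
      rw [hβdef, hgeo.2.2, map_sub, map_smul, coordSum_simple, smul_eq_mul, mul_one]
    rw [h2] at h1
    linarith
  · have := hbi.2 β ⟨hβpos, hβA⟩ (e k) ⟨simple_mem_pos k, hcon k⟩ α (hsub hαA)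
      1 (2 * BF (e k) α) zero_le_one (by linarith) hdecomp
    exact this.2 hαA

lemma biconvex_to_invSet (hgeo : IsGeometricRep cs e BF ρ) :
    ∀ n : ℕ, ∀ A : Set V, A.Finite → A.ncard = n → A ⊆ PhiPos ρ e →
      BiconvexRoots ρ e A → ∃ w, A = InvSet ρ e w := by
  intro n
  induction n using Nat.strong_induction_on with
  | _ n IH =>
  intro A hfin hcard hsub hbi
  rcases Set.eq_empty_or_nonempty A with rfl | hne
  · exact ⟨1, (invSet_one' hgeo).symm⟩
  obtain ⟨i, hiA⟩ := exists_simple_mem hgeo hsub hfin hne hbi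
  set A' := (ρ (cs.simple i)) '' (A \ {e i}) with hA'def
  have hinj : Function.Injective (ρ (cs.simple i)) := by
    intro x y hxy
    have h := congrArg (ρ (cs.simple i)) hxy
    rwa [rho_simple_invol, rho_simple_invol] at h
  have hfin' : A'.Finite := hfin.diff.image _
  have hnpos : 1 ≤ n := by
    have : 0 < A.ncard := (Set.ncard_pos hfin).mpr hne
    omega
  have hcard' : A'.ncard = n - 1 := by
    rw [hA'def, Set.ncard_image_of_injective _ hinj,
      Set.ncard_diff_singleton_of_mem hiA, hcard]
  have hmem' : ∀ x : V, x ∈ A' ↔ ρ (cs.simple i) x ∈ A ∧ ρ (cs.simple i) x ≠ e i := by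
    intro x
    constructor
    · rintro ⟨y, ⟨hyA, hyne⟩, rfl⟩
      rw [rho_simple_invol]
      exact ⟨hyA, by simpa using hyne⟩
    · rintro ⟨h1, h2⟩
      exact ⟨ρ (cs.simple i) x, ⟨h1, h2⟩, rho_simple_invol i x⟩
  have hsub' : A' ⊆ PhiPos ρ e := by
    rintro x ⟨y, ⟨hyA, hyne⟩, rfl⟩
    exact simple_perm hgeo (hsub hyA) (by simpa using hyne)
  -- `s i` of an element of `Φ⁺ \ A'` is either `-e i` or in `Φ⁺ \ A`
  have hcompl : ∀ x' : V, x' ∈ PhiPos ρ e → x' ∉ A' →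
      ρ (cs.simple i) x' = - e i ∨ ρ (cs.simple i) x' ∈ PhiPos ρ e \ A := by
    intro x' hx'pos hx'A
    by_cases hx'i : x' = e i
    · left
      rw [hx'i, rho_simple_self hgeo]
    · right
      refine ⟨simple_perm hgeo hx'pos hx'i, fun hmem => ?_⟩
      have hne1 : ρ (cs.simple i) x' ≠ e i := by
        intro h
        have := congrArg (ρ (cs.simple i)) h
        rw [rho_simple_invol, rho_simple_self hgeo] at this
        exact neg_simple_not_pos i (this ▸ hx'pos)
      exact hx'A ((hmem' x').mpr ⟨hmem, hne1⟩)
  have hbi' : BiconvexRoots ρ e A' := by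
    constructor
    · -- convexity of A'
      intro α' hα' β' hβ' lam hlam a b ha hb heq
      obtain ⟨γα, ⟨hγαA, hγαne⟩, hγα⟩ := hα'
      obtain ⟨γβ, ⟨hγβA, hγβne⟩, hγβ⟩ := hβ'
      have hμ : ρ (cs.simple i) lam = a • γα + b • γβ := by
        rw [heq, map_add, map_smul, map_smul, ← hγα, ← hγβ, rho_simple_invol, rho_simple_invol]
      have hlamne : lam ≠ e i := by
        intro h
        have h2 : ρ (cs.simple i) lam = - e i := by rw [h, rho_simple_self hgeo]
        classical
        have h3 : (0:ℝ) ≤ e.repr (a • γα + b • γβ) i := by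
          simp only [map_add, map_smul, Finsupp.add_apply, Finsupp.smul_apply, smul_eq_mul]
          exact add_nonneg (mul_nonneg ha ((hsub hγαA).2 i)) (mul_nonneg hb ((hsub hγβA).2 i))
        rw [← hμ, h2, map_neg, Finsupp.neg_apply, e.repr_self, Finsupp.single_apply,
          if_pos rfl] at h3
        linarith
      have hμpos : ρ (cs.simple i) lam ∈ PhiPos ρ e := simple_perm hgeo hlam hlamne
      have hμA : ρ (cs.simple i) lam ∈ A :=
        hbi.1 γα hγαA γβ hγβA _ hμpos a b ha hb hμ
      have hμne : ρ (cs.simple i) lam ≠ e i := by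
        intro h
        have := congrArg (ρ (cs.simple i)) h
        rw [rho_simple_invol, rho_simple_self hgeo] at this
        exact neg_simple_not_pos i (this ▸ hlam)
      exact (hmem' lam).mpr ⟨hμA, hμne⟩
    · -- convexity of the complement of A'
      intro α' hα' β' hβ' lam hlam a b ha hb heq
      refine ⟨hlam, fun hlamA' => ?_⟩
      obtain ⟨hμA, hμne⟩ := (hmem' lam).mp hlamA'
      set μ := ρ (cs.simple i) lam with hμdef
      have hμeq : μ = a • ρ (cs.simple i) α' + b • ρ (cs.simple i) β' := by
        rw [hμdef, heq, map_add, map_smul, map_smul]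
      have hμpos : μ ∈ PhiPos ρ e := hsub hμA
      rcases hcompl α' hα'.1 hα'.2 with hcα | hcα <;>
        rcases hcompl β' hβ'.1 hβ'.2 with hcβ | hcβ
      · -- both are -e i
        rw [hcα, hcβ] at hμeq
        have hzero : μ = (-(a+b)) • e i := by rw [hμeq]; module
        classical
        have h1 : 0 ≤ e.repr μ i := hμpos.2 i
        rw [hzero, map_smul, Finsupp.smul_apply, e.repr_self, Finsupp.single_apply,
          if_pos rfl, smul_eq_mul, mul_one] at h1
        have hab : a + b = 0 := by linarith
        have : μ = 0 := by rw [hzero, hab]; simp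
        exact root_ne_zero hgeo hμpos.1 this
      · -- α' ↦ -e i, β' good
        rw [hcα] at hμeq
        rcases eq_or_lt_of_le hb with hb0 | hb0
        · have hzero : μ = (-a) • e i := by rw [hμeq, ← hb0]; module
          classical
          have h1 : 0 ≤ e.repr μ i := hμpos.2 i
          rw [hzero, map_smul, Finsupp.smul_apply, e.repr_self, Finsupp.single_apply,
            if_pos rfl, smul_eq_mul, mul_one] at h1
          have ha0 : a = 0 := by linarith
          have : μ = 0 := by rw [hzero, ha0]; simp
          exact root_ne_zero hgeo hμpos.1 this
        · have hbne : b ≠ 0 := ne_of_gt hb0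
          have hy : ρ (cs.simple i) β' = (1/b) • μ + (a/b) • e i := by
            rw [hμeq]
            match_scalars <;> field_simp <;> ring
          have := hbi.1 μ hμA (e i) hiA _ (hcβ.1) (1/b) (a/b)
            (by positivity) (by positivity) hy
          exact hcβ.2 this
      · -- β' ↦ -e i, α' good
        rw [hcβ] at hμeq
        rcases eq_or_lt_of_le ha with ha0 | ha0
        · have hzero : μ = (-b) • e i := by rw [hμeq, ← ha0]; module
          classical
          have h1 : 0 ≤ e.repr μ i := hμpos.2 i
          rw [hzero, map_smul, Finsupp.smul_apply, e.repr_self, Finsupp.single_apply,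
            if_pos rfl, smul_eq_mul, mul_one] at h1
          have hb0 : b = 0 := by linarith
          have : μ = 0 := by rw [hzero, hb0]; simp
          exact root_ne_zero hgeo hμpos.1 this
        · have hane : a ≠ 0 := ne_of_gt ha0
          have hy : ρ (cs.simple i) α' = (1/a) • μ + (b/a) • e i := by
            rw [hμeq]
            match_scalars <;> field_simp <;> ring
          have := hbi.1 μ hμA (e i) hiA _ (hcα.1) (1/a) (b/a)
            (by positivity) (by positivity) hy
          exact hcα.2 this
      · -- both good
        have := hbi.2 _ hcα _ hcβ μ hμpos a b ha hb hμeq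
        exact this.2 hμA
  obtain ⟨w', hw'⟩ := IH (n-1) (by omega) A' hfin' hcard' hsub' hbi'
  -- `e i ∉ A'`, hence `ρ w' (e i)` is positive
  have hiA' : e i ∉ A' := by
    intro h
    obtain ⟨h1, _⟩ := (hmem' (e i)).mp h
    rw [rho_simple_self hgeo] at h1
    exact neg_simple_not_pos i (hsub h1)
  have hw'i_pos : ρ w' (e i) ∈ PhiPos ρ e := by
    rcases pos_or_neg_root hgeo w' i with h | h
    · exact h
    · exact absurd (hw' ▸ (⟨simple_mem_pos i, h⟩ : e i ∈ InvSet ρ e w')) hiA'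
  refine ⟨w' * cs.simple i, ?_⟩
  have hdecomp : ∀ α : V, ρ (w' * cs.simple i) α = ρ w' (ρ (cs.simple i) α) := by
    intro α
    rw [map_mul, Module.End.mul_apply]
  ext α
  constructor
  · intro hαA
    refine ⟨hsub hαA, ?_⟩
    by_cases hαi : α = e i
    · show - ρ (w' * cs.simple i) α ∈ PhiPos ρ e
      rw [hαi, hdecomp, rho_simple_self hgeo, map_neg, neg_neg]
      exact hw'i_pos
    · have hβA' : ρ (cs.simple i) α ∈ A' := (hmem' _).mpr (by
        rw [rho_simple_invol]
        refine ⟨hαA, hαi⟩)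
      rw [hw'] at hβA'
      rw [hdecomp]
      exact hβA'.2
  · rintro ⟨hαpos, hαneg⟩
    by_cases hαi : α = e i
    · rw [hαi]; exact hiA
    · have hβ : ρ (cs.simple i) α ∈ InvSet ρ e w' := by
        refine ⟨simple_perm hgeo hαpos hαi, ?_⟩
        rw [hdecomp] at hαneg
        exact hαneg
      rw [← hw'] at hβ
      obtain ⟨h1, _⟩ := (hmem' _).mp hβ
      rwa [rho_simple_invol] at h1

end CoxAux

/-- A subset `A ⊆ Φ⁺` equals `Φ(w)` for some `w ∈ W` if and only if `A` is
finite and biconvex. -/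
theorem eq_invSet_iff_finite_biconvex
    {M : CoxeterMatrix B} (cs : CoxeterSystem M W) (e : Module.Basis B ℝ V)
    (BF : LinearMap.BilinForm ℝ V) (ρ : W →* V →ₗ[ℝ] V)
    (hgeo : IsGeometricRep cs e BF ρ) (A : Set V) (hA : A ⊆ PhiPos ρ e) :
    (∃ w : W, A = InvSet ρ e w) ↔ A.Finite ∧ BiconvexRoots ρ e A := by
  constructor
  · rintro ⟨w, rfl⟩
    exact ⟨CoxAux.invSet_finite hgeo (cs.length w) w rfl, CoxAux.invSet_biconvex hgeo w⟩
  · rintro ⟨hfin, hbi⟩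
    exact CoxAux.biconvex_to_invSet hgeo A.ncard A hfin rfl hA hbi
end

section
/- If x is a reduced expression for w ∈ W, then the standard encoding T_x of x is a standard labeling of Φ⁺. -/
/-!
Setup: a Coxeter system `cs : CoxeterSystem M W`, a real vector space `V` with a basis
`e : Module.Basis B ℝ V` of simple roots, a symmetric bilinear form `BF` with
`BF (e i) (e j) = -cos (π / M i j)` (the convention `M i j = 0` means `∞`, and division by
zero in `ℝ` gives `-cos 0 = -1`), and the geometric representation `ρ : W →* (V →ₗ[ℝ] V)`
determined by `ρ (s i) v = v - 2 ⟪α_i, v⟫ • α_i`.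
-/

variable {B : Type*} {W : Type*} [Group W] {V : Type*} [AddCommGroup V] [Module ℝ V]

/-- A labeling `T : Φ⁺ → ℕ` is *standard* if whenever a positive root `γ` lies in the convex
cone spanned by distinct positive roots `α` and `β`, the label `T γ` lies between `T α` and
`T β`. -/
def IsStandardLabeling (ρ : W →* V →ₗ[ℝ] V) (e : Module.Basis B ℝ V)
    (T : PhiPos ρ e → ℕ) : Prop :=
  ∀ (α β γ : PhiPos ρ e) (a b : ℝ), α ≠ β → 0 ≤ a → 0 ≤ b →
    (γ : V) = a • (α : V) + b • (β : V) →
    (T α ≤ T γ ∧ T γ ≤ T β) ∨ (T β ≤ T γ ∧ T γ ≤ T α)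

/-- A labeling `T : Φ⁺ → ℕ` is *sequential* if its support is finite and the nonzero labels
are exactly `{1, …, |supp T|}`. -/
def IsSequentialLabeling (ρ : W →* V →ₗ[ℝ] V) (e : Module.Basis B ℝ V)
    (T : PhiPos ρ e → ℕ) : Prop :=
  ∃ s : Finset (PhiPos ρ e), (∀ lam, lam ∈ s ↔ T lam ≠ 0) ∧
    T '' ↑s = Set.Icc 1 s.card

open scoped Classical in
/-- The *standard encoding* `T_x` of an expression `x`: the `k`-th entry of the root sequence
gets label `k`, and roots not occurring in the root sequence get label `0`. -/
noncomputable def stdEncoding {M : CoxeterMatrix B} (cs : CoxeterSystem M W)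
    (ρ : W →* V →ₗ[ℝ] V) (e : Module.Basis B ℝ V) (l : List B) : PhiPos ρ e → ℕ :=
  fun lam => if (lam : V) ∈ rootSeq cs ρ e l
    then (rootSeq cs ρ e l).idxOf (lam : V) + 1 else 0

noncomputable def cheb (x : ℝ) : ℕ → ℝ
  | 0 => 0
  | 1 => 1
  | (k+2) => x * cheb x (k+1) - cheb x k

theorem cheb_two : ∀ k, cheb 2 k = k := by
  intro k
  induction k using Nat.twoStepInduction with
  | zero => simp [cheb]
  | one => simp [cheb]
  | more k ih1 ih2 =>
    rw [show cheb 2 (k+2) = 2 * cheb 2 (k+1) - cheb 2 k from rfl, ih1, ih2]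
    push_cast
    ring

theorem cheb_sin (θ : ℝ) (h : Real.sin θ ≠ 0) :
    ∀ k, cheb (2 * Real.cos θ) k = Real.sin (k * θ) / Real.sin θ := by
  intro k
  induction k using Nat.twoStepInduction with
  | zero => simp [cheb]
  | one => simp [cheb, div_self h]
  | more k ih1 ih2 =>
    rw [show cheb (2 * Real.cos θ) (k+2)
        = 2 * Real.cos θ * cheb (2 * Real.cos θ) (k+1) - cheb (2 * Real.cos θ) k from rfl,
      ih1, ih2]
    have ha : ((k:ℝ)+2) * θ = ((k:ℝ)+1) * θ + θ := by ring
    have hb : (k:ℝ) * θ = ((k:ℝ)+1) * θ - θ := by ring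
    push_cast
    rw [ha, hb, Real.sin_add, Real.sin_sub]
    field_simp
    ring

theorem cheb_nonneg (m k : ℕ) (hm : m ≠ 1) (hk : m = 0 ∨ k ≤ m) :
    0 ≤ cheb (2 * Real.cos (Real.pi / m)) k := by
  rcases Nat.eq_zero_or_pos m with h0 | hpos
  · subst h0
    simp only [Nat.cast_zero, div_zero, Real.cos_zero, mul_one]
    rw [cheb_two]
    positivity
  · have hm2 : 2 ≤ m := by omega
    have hkm : k ≤ m := by
      rcases hk with h | h
      · omega
      · exact h
    have hmR : (0:ℝ) < m := by exact_mod_cast hpos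
    have hθpos : 0 < Real.pi / m := by positivity
    have hθlt : Real.pi / m < Real.pi := by
      rw [div_lt_iff₀ hmR]
      nlinarith [Real.pi_pos, (show (2:ℝ) ≤ m by exact_mod_cast hm2)]
    have hsin : 0 < Real.sin (Real.pi / m) :=
      Real.sin_pos_of_pos_of_lt_pi hθpos hθlt
    rw [cheb_sin _ (ne_of_gt hsin)]
    apply div_nonneg _ (le_of_lt hsin)
    apply Real.sin_nonneg_of_nonneg_of_le_pi
    · positivity
    · have h1 : (k:ℝ) * (Real.pi / m) ≤ (m:ℝ) * (Real.pi / m) :=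
        mul_le_mul_of_nonneg_right (by exact_mod_cast hkm) (le_of_lt hθpos)
      have h2 : (m:ℝ) * (Real.pi / m) = Real.pi := by
        field_simp
      linarith

namespace StdEnc

open CoxeterSystem List

variable {M : CoxeterMatrix B} (cs : CoxeterSystem M W) (e : Module.Basis B ℝ V)
  (BF : LinearMap.BilinForm ℝ V) (ρ : W →* V →ₗ[ℝ] V)

/-- coordinatewise nonnegative -/
def Pos (v : V) : Prop := ∀ b, 0 ≤ e.repr v b

/-- coordinatewise nonpositive -/
def Neg (v : V) : Prop := ∀ b, e.repr v b ≤ 0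

theorem pos_neg_eq_zero {v : V} (hp : Pos e v) (hn : Neg e v) : v = 0 := by
  have : e.repr v = 0 := by
    ext b
    exact le_antisymm (hn b) (hp b)
  simpa using congrArg e.repr.symm this

theorem pos_simple (i : B) : Pos e (e i) := by
  intro b
  rw [e.repr_self]
  by_cases h : i = b <;> simp [Finsupp.single_apply, h]

theorem pos_neg' {v : V} (h : Pos e v) : Neg e (-v) := by
  intro b; simpa using h b

theorem neg_pos' {v : V} (h : Neg e v) : Pos e (-v) := by
  intro b; simpa using h b

theorem pos_comb {x y : V} {a b : ℝ} (hx : Pos e x) (hy : Pos e y)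
    (ha : 0 ≤ a) (hb : 0 ≤ b) : Pos e (a • x + b • y) := by
  intro c
  simp only [map_add, map_smul, Finsupp.add_apply, Finsupp.smul_apply, smul_eq_mul]
  exact add_nonneg (mul_nonneg ha (hx c)) (mul_nonneg hb (hy c))

theorem neg_comb {x y : V} {a b : ℝ} (hx : Neg e x) (hy : Neg e y)
    (ha : 0 ≤ a) (hb : 0 ≤ b) : Neg e (a • x + b • y) := by
  intro c
  simp only [map_add, map_smul, Finsupp.add_apply, Finsupp.smul_apply, smul_eq_mul]
  exact add_nonpos (mul_nonpos_of_nonneg_of_nonpos ha (hx c))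
    (mul_nonpos_of_nonneg_of_nonpos hb (hy c))

variable (hg : IsGeometricRep cs e BF ρ)
include hg

theorem BF_simple_self (i : B) : BF (e i) (e i) = 1 := by
  rw [hg.2.1 i i, M.diagonal i]
  norm_num

theorem rho_simple_self (i : B) : ρ (cs.simple i) (e i) = -(e i) := by
  rw [hg.2.2 i (e i), BF_simple_self cs e BF ρ hg i]
  module

theorem BF_invariant (w : W) (x y : V) : BF (ρ w x) (ρ w y) = BF x y := by
  induction w using cs.simple_induction_left generalizing x y with
  | one => simp
  | mul_simple_left w i ih =>
    have h1 : BF (e i) (e i) = 1 := BF_simple_self cs e BF ρ hg i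
    have h2 := hg.1
    have expand : ∀ u v : V,
        BF (u - (2 * BF (e i) u) • e i) (v - (2 * BF (e i) v) • e i) = BF u v := by
      intro u v
      simp only [map_sub, map_smul, LinearMap.sub_apply, LinearMap.smul_apply, smul_eq_mul, h1]
      rw [h2 u (e i)]
      ring
    rw [map_mul, Module.End.mul_apply, Module.End.mul_apply, hg.2.2, hg.2.2, expand]
    exact ih x y

theorem BF_root_self (w : W) (i : B) : BF (ρ w (e i)) (ρ w (e i)) = 1 := by
  rw [BF_invariant cs e BF ρ hg, BF_simple_self cs e BF ρ hg]

theorem root_ne_zero (w : W) (i : B) : ρ w (e i) ≠ 0 := by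
  intro h
  have := BF_root_self cs e BF ρ hg w i
  rw [h] at this
  simp at this

omit hg in
theorem rho_inv_apply (w : W) (v : V) : ρ w⁻¹ (ρ w v) = v := by
  have : ρ w⁻¹ * ρ w = 1 := by rw [← map_mul, inv_mul_cancel, map_one]
  calc ρ w⁻¹ (ρ w v) = (ρ w⁻¹ * ρ w) v := rfl
  _ = v := by rw [this]; rfl


section Dihedral

variable (i j : B)

theorem refl_i (x y : ℝ) :
    ρ (cs.simple i) (x • e i + y • e j)
      = (-(2 * BF (e i) (e j)) * y - x) • e i + y • e j := by
  rw [hg.2.2]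
  simp only [map_add, map_smul, smul_eq_mul, BF_simple_self cs e BF ρ hg i]
  module

theorem refl_j (x y : ℝ) :
    ρ (cs.simple j) (x • e i + y • e j)
      = x • e i + (-(2 * BF (e i) (e j)) * x - y) • e j := by
  rw [hg.2.2]
  simp only [map_add, map_smul, smul_eq_mul, BF_simple_self cs e BF ρ hg j,
    hg.1 (e j) (e i)]
  module

theorem dihedral_vec (k : ℕ) :
    ρ (cs.wordProd (CoxeterSystem.alternatingWord i j k)) (e i)
      = (if Even k then cheb (-(2 * BF (e i) (e j))) (k+1)
          else cheb (-(2 * BF (e i) (e j))) k) • e i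
        + (if Even k then cheb (-(2 * BF (e i) (e j))) k
          else cheb (-(2 * BF (e i) (e j))) (k+1)) • e j := by
  set χ : ℝ := -(2 * BF (e i) (e j)) with hχ
  have hch : ∀ t, cheb χ (t + 1 + 1) = χ * cheb χ (t + 1) - cheb χ t := fun t => rfl
  induction k with
  | zero =>
    simp [CoxeterSystem.alternatingWord, cheb]
  | succ k ih =>
    rw [CoxeterSystem.alternatingWord_succ', CoxeterSystem.wordProd_cons, map_mul,
      Module.End.mul_apply, ih]
    by_cases hk : Even k
    · have hk1 : ¬ Even (k+1) := by simp [Nat.even_add_one, hk]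
      simp only [hk, if_true, hk1, if_false]
      rw [refl_j cs e BF ρ hg i j, hch k]
    · have hk1 : Even (k+1) := by simpa [Nat.even_add_one] using hk
      simp only [hk, if_false, hk1, if_true]
      rw [refl_i cs e BF ρ hg i j, hch k]

theorem dihedral_pos (hij : i ≠ j) (k : ℕ) (hk : M i j = 0 ∨ k + 1 ≤ M i j) :
    ∃ a b : ℝ, 0 ≤ a ∧ 0 ≤ b ∧
      ρ (cs.wordProd (CoxeterSystem.alternatingWord i j k)) (e i) = a • e i + b • e j := by
  have hχ : -(2 * BF (e i) (e j)) = 2 * Real.cos (Real.pi / (M i j : ℝ)) := by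
    rw [hg.2.1 i j]
    ring
  have hm1 : M i j ≠ 1 := M.off_diagonal i j hij
  have h1 : 0 ≤ cheb (-(2 * BF (e i) (e j))) k := by
    rw [hχ]
    refine cheb_nonneg _ _ hm1 ?_
    rcases hk with h | h
    · exact Or.inl h
    · exact Or.inr (by omega)
  have h2 : 0 ≤ cheb (-(2 * BF (e i) (e j))) (k+1) := by
    rw [hχ]
    refine cheb_nonneg _ _ hm1 ?_
    rcases hk with h | h
    · exact Or.inl h
    · exact Or.inr h
  by_cases hke : Even k
  · exact ⟨_, _, h2, h1, by rw [dihedral_vec cs e BF ρ hg i j k]; simp [hke]⟩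
  · exact ⟨_, _, h1, h2, by rw [dihedral_vec cs e BF ρ hg i j k]; simp [hke]⟩

end Dihedral


/-! ### The key lemma: `ℓ(w sᵢ) > ℓ(w)` implies `w αᵢ ≥ 0` -/

theorem pos_of_not_isRightDescent :
    ∀ (w : W) (i : B), ¬ cs.IsRightDescent w i → Pos e (ρ w (e i)) := by
  suffices H : ∀ (n : ℕ) (w : W) (i : B), cs.length w = n → ¬ cs.IsRightDescent w i →
      Pos e (ρ w (e i)) by
    exact fun w i h => H (cs.length w) w i rfl h
  intro n
  induction n using Nat.strong_induction_on with
  | _ n ih =>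
  intro w i hlen hdesc
  rcases Nat.eq_zero_or_pos n with h0 | hn
  · have hw1 : w = 1 := cs.length_eq_zero_iff.mp (by omega)
    subst hw1
    simpa using pos_simple e i
  · have hwne : w ≠ 1 := by
      intro h
      subst h
      simp only [CoxeterSystem.length_one] at hlen
      omega
    obtain ⟨j, hj⟩ := cs.exists_rightDescent_of_ne_one hwne
    have hij : i ≠ j := by
      intro h
      exact hdesc (h ▸ hj)
    classical
    set v : ℕ → W := fun k => w * (cs.wordProd (CoxeterSystem.alternatingWord i j k))⁻¹
      with hv
    have hvw : ∀ k, w = v k * cs.wordProd (CoxeterSystem.alternatingWord i j k) := by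
      intro k
      simp [hv]
    have htri : ∀ k, n ≤ cs.length (v k) + k := by
      intro k
      calc n = cs.length w := hlen.symm
      _ ≤ cs.length (v k) + cs.length (cs.wordProd (CoxeterSystem.alternatingWord i j k)) := by
            nth_rewrite 1 [hvw k]
            exact cs.length_mul_le _ _
      _ ≤ cs.length (v k) + k := by
            have h1 := cs.length_wordProd_le (CoxeterSystem.alternatingWord i j k)
            rw [CoxeterSystem.length_alternatingWord] at h1
            omega
    have hstep : ∀ k, v (k+1) = v k * cs.simple (if Even k then j else i) := by
      intro k
      rw [hv]
      simp only
      rw [CoxeterSystem.alternatingWord_succ', CoxeterSystem.wordProd_cons, mul_inv_rev,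
        CoxeterSystem.inv_simple, ← mul_assoc]
    have hpar : ∀ k, 1 ≤ k → ((if Even (k-1) then j else i) = if Even k then i else j) := by
      intro k hk
      rcases Nat.even_or_odd k with he | ho
      · have h1 : ¬ Even (k-1) := by
          rw [Nat.even_iff] at he ⊢
          omega
        simp [he, h1]
      · have h1 : Even (k-1) := by
          rw [Nat.odd_iff] at ho
          rw [Nat.even_iff]
          omega
        simp [h1, Nat.not_even_iff_odd.mpr ho]
    set Good : ℕ → Prop :=
      fun k => cs.length (v k) + k = n ∧ (M i j = 0 ∨ k ≤ M i j) with hGood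
    have hGood1 : Good 1 := by
      constructor
      · have halt1 : CoxeterSystem.alternatingWord i j 1 = [j] := rfl
        have hv1 : v 1 = w * cs.simple j := by
          rw [hv]
          simp only [halt1, CoxeterSystem.wordProd_singleton, CoxeterSystem.inv_simple]
        have hms := cs.length_mul_simple w j
        have hjlt : cs.length (w * cs.simple j) < cs.length w := hj
        rw [hv1]
        omega
      · omega
    set K : ℕ := Nat.findGreatest Good n with hK
    have hK1 : 1 ≤ K := Nat.le_findGreatest hn hGood1
    have hKn : K ≤ n := Nat.findGreatest_le n
    have hGoodK : Good K := Nat.findGreatest_of_ne_zero hK.symm (by omega)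
    obtain ⟨hlvK, hG2⟩ : cs.length (v K) + K = n ∧ (M i j = 0 ∨ K ≤ M i j) := hGoodK
    have hnglift : K < n → cs.length (v (K+1)) + (K+1) = n →
        (M i j = 0 ∨ K + 1 ≤ M i j) → False := by
      intro hKlt ha hb
      exact Nat.findGreatest_is_greatest (show Nat.findGreatest Good n < K + 1 by omega)
        (by omega) ⟨ha, hb⟩
    clear_value K
    by_cases hbr : M i j ≠ 0 ∧ K = M i j
    · -- braid case: contradiction with ¬Desc w i
      exfalso
      obtain ⟨hm0, hKm⟩ := hbr
      have hm1 : 1 ≤ M i j := by omega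
      have hbraid : cs.wordProd (CoxeterSystem.alternatingWord i j K)
          = cs.wordProd (CoxeterSystem.alternatingWord i j (K - 1)) * cs.simple i := by
        have h1 := cs.wordProd_braidWord_eq i j
        unfold CoxeterSystem.braidWord at h1
        rw [M.symmetric j i] at h1
        rw [← hKm] at h1
        have h2 : CoxeterSystem.alternatingWord j i K
            = (CoxeterSystem.alternatingWord i j (K - 1)).concat i := by
          conv_lhs => rw [show K = (K - 1) + 1 by omega]
          rw [CoxeterSystem.alternatingWord_succ]
        rw [h1, h2, CoxeterSystem.wordProd_concat]
      have hwsi : w * cs.simple i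
          = v K * cs.wordProd (CoxeterSystem.alternatingWord i j (K - 1)) := by
        nth_rewrite 1 [hvw K]
        rw [hbraid, ← mul_assoc, cs.simple_mul_simple_cancel_right]
      have hlen2 : cs.length (w * cs.simple i) < n := by
        have h2 := cs.length_mul_le (v K)
          (cs.wordProd (CoxeterSystem.alternatingWord i j (K - 1)))
        have h3 := cs.length_wordProd_le (CoxeterSystem.alternatingWord i j (K - 1))
        rw [CoxeterSystem.length_alternatingWord] at h3
        rw [hwsi]
        omega
      exact hdesc (show cs.length (w * cs.simple i) < cs.length w by omega)
    · -- main case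
      have hm : M i j = 0 ∨ K + 1 ≤ M i j := by
        rcases hG2 with h | h
        · exact Or.inl h
        · rcases Nat.eq_zero_or_pos (M i j) with h' | h'
          · exact Or.inl h'
          · right
            rcases Nat.lt_or_ge K (M i j) with h'' | h''
            · omega
            · exact absurd ⟨by omega, by omega⟩ hbr
      have hndc : ¬ cs.IsRightDescent (v K) (if Even K then j else i) := by
        by_cases hKn' : K = n
        · have h5 : cs.length (v K) = 0 := by omega
          have hvK1 : v K = 1 := cs.length_eq_zero_iff.mp h5
          rw [hvK1]
          exact cs.not_isRightDescent_one _
        · have hfirst : cs.length (v (K+1)) + (K+1) ≠ n := by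
            intro h
            exact hnglift (by omega) h hm
          have hms := cs.length_mul_simple (v K) (if Even K then j else i)
          rw [← hstep K] at hms
          have htriK := htri (K+1)
          intro hdescvc
          have hlt : cs.length (v K * cs.simple (if Even K then j else i))
              < cs.length (v K) := hdescvc
          rw [← hstep K] at hlt
          omega
      have hndc' : ¬ cs.IsRightDescent (v K) (if Even K then i else j) := by
        have hlvKm : cs.length (v (K-1)) + (K - 1) = n := by
          have hms := cs.length_mul_simple (v (K-1)) (if Even (K-1) then j else i)
          rw [← hstep (K-1), show K - 1 + 1 = K by omega] at hms
          have h6 := htri (K-1)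
          omega
        have h1 := hstep (K-1)
        rw [show K - 1 + 1 = K by omega, hpar K hK1] at h1
        have hrel : v K * cs.simple (if Even K then i else j) = v (K - 1) := by
          rw [h1, mul_assoc, cs.simple_mul_simple_self, mul_one]
        intro hdescvc
        have hlt : cs.length (v K * cs.simple (if Even K then i else j))
            < cs.length (v K) := hdescvc
        rw [hrel] at hlt
        omega
      have hndi : ¬ cs.IsRightDescent (v K) i := by
        rcases Nat.even_or_odd K with he | ho
        · simpa [he] using hndc'
        · simpa [Nat.not_even_iff_odd.mpr ho] using hndc
      have hndj : ¬ cs.IsRightDescent (v K) j := by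
        rcases Nat.even_or_odd K with he | ho
        · simpa [he] using hndc
        · simpa [Nat.not_even_iff_odd.mpr ho] using hndc'
      have hlvKlt : cs.length (v K) < n := by omega
      have hposi : Pos e (ρ (v K) (e i)) :=
        ih (cs.length (v K)) hlvKlt (v K) i rfl hndi
      have hposj : Pos e (ρ (v K) (e j)) :=
        ih (cs.length (v K)) hlvKlt (v K) j rfl hndj
      obtain ⟨a, b, ha, hb, heq⟩ := dihedral_pos cs e BF ρ hg i j hij K hm
      have hfin : ρ w (e i) = a • ρ (v K) (e i) + b • ρ (v K) (e j) := by
        nth_rewrite 1 [hvw K]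
        rw [map_mul, Module.End.mul_apply, heq, map_add, map_smul, map_smul]
      rw [hfin]
      exact pos_comb e hposi hposj ha hb

/-! ### Corollaries of the key lemma -/

theorem neg_of_isRightDescent (w : W) (i : B) (h : cs.IsRightDescent w i) :
    Neg e (ρ w (e i)) := by
  have h2 : ¬ cs.IsRightDescent (w * cs.simple i) i :=
    (cs.isRightDescent_iff_not_isRightDescent_mul).mp h
  have hp := pos_of_not_isRightDescent cs e BF ρ hg (w * cs.simple i) i h2
  have hw : ρ w (e i) = - ρ (w * cs.simple i) (e i) := by
    nth_rewrite 1 [← cs.simple_mul_simple_cancel_right (w := w) i]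
    rw [map_mul, Module.End.mul_apply, rho_simple_self cs e BF ρ hg i, map_neg]
  rw [hw]
  exact pos_neg' e hp

theorem root_pos_or_neg (w : W) (i : B) :
    Pos e (ρ w (e i)) ∨ Neg e (ρ w (e i)) := by
  by_cases h : cs.IsRightDescent w i
  · exact Or.inr (neg_of_isRightDescent cs e BF ρ hg w i h)
  · exact Or.inl (pos_of_not_isRightDescent cs e BF ρ hg w i h)

omit hg in
theorem rho_rho (w z : W) (x : V) : ρ w (ρ z x) = ρ (w * z) x := by
  rw [map_mul]
  rfl

theorem root_not_pos_neg (w : W) (i : B) {x : V} (hx : x = ρ w (e i))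
    (hp : Pos e x) (hn : Neg e x) : False := by
  exact root_ne_zero cs e BF ρ hg w i (hx ▸ pos_neg_eq_zero e hp hn)

/-- A positive root sent to a negative root by `sᵢ` must be `αᵢ` itself. -/
theorem eq_simple_of_simple_neg (z : W) (r : B) (i : B)
    (hp : Pos e (ρ z (e r))) (hn : Neg e (ρ (cs.simple i) (ρ z (e r)))) :
    ρ z (e r) = e i := by
  set β := ρ z (e r) with hβ
  have hcoord : ∀ b, b ≠ i → e.repr β b = 0 := by
    intro b hbi
    have h1 := hp b
    have h2 := hn b
    have h3 : e.repr (ρ (cs.simple i) β) b = e.repr β b := by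
      rw [hg.2.2]
      simp only [map_sub, map_smul, Finsupp.sub_apply, Finsupp.smul_apply, smul_eq_mul,
        Module.Basis.repr_self]
      rw [Finsupp.single_eq_of_ne' (fun h => hbi h.symm)]
      ring
    rw [h3] at h2
    linarith
  have hexpand : β = e.repr β i • e i := by
    apply e.repr.injective
    ext b
    by_cases hbi : b = i
    · subst hbi
      simp only [map_smul, Finsupp.smul_apply, Module.Basis.repr_self, smul_eq_mul,
        Finsupp.single_eq_same, mul_one]
    · rw [hcoord b hbi]
      simp only [map_smul, Finsupp.smul_apply, Module.Basis.repr_self, smul_eq_mul]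
      rw [Finsupp.single_eq_of_ne' (fun h => hbi h.symm)]
      ring
  have hnorm : BF β β = 1 := BF_root_self cs e BF ρ hg z r
  nth_rewrite 1 [hexpand] at hnorm
  nth_rewrite 2 [hexpand] at hnorm
  simp only [map_smul, LinearMap.smul_apply, smul_eq_mul,
    BF_simple_self cs e BF ρ hg i] at hnorm
  have hc : e.repr β i = 1 := by nlinarith [hp i]
  rw [hexpand, hc, one_smul]

/-! ### Root sequences -/

omit hg in
theorem rootSeq_length (l : List B) : (rootSeq cs ρ e l).length = l.length := by
  induction l with
  | nil => rfl
  | cons i t ih => simp [rootSeq, ih]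

omit hg in
theorem rootSeq_getElem (l : List B) (m : ℕ) (hm : m < l.length) :
    (rootSeq cs ρ e l)[m]'(by rw [rootSeq_length]; exact hm)
      = ρ (cs.wordProd (l.drop (m+1)))⁻¹ (e (l[m])) := by
  induction l generalizing m with
  | nil => simp at hm
  | cons i t ih =>
    cases m with
    | zero => simp [rootSeq]
    | succ m =>
      have hm' : m < t.length := by simpa using hm
      simpa [rootSeq] using ih m hm'

section RootSeq

variable {l : List B} (hl : cs.IsReduced l)
include hl

theorem sign_pos (k m : ℕ) (hmk : m < k) (hm : m < l.length) :
    Pos e (ρ (cs.wordProd (l.drop k)) (ρ (cs.wordProd (l.drop (m+1)))⁻¹ (e (l[m])))) := by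
  set C : List B := (l.drop (m+1)).take (k - (m+1)) with hC
  have hsplit : cs.wordProd (l.drop (m+1)) = cs.wordProd C * cs.wordProd (l.drop k) := by
    rw [← CoxeterSystem.wordProd_append]
    congr 1
    conv_lhs => rw [← List.take_append_drop (k - (m+1)) (l.drop (m+1))]
    rw [List.drop_drop, show m + 1 + (k - (m+1)) = k by omega]
  have hgrp : cs.wordProd (l.drop k) * (cs.wordProd (l.drop (m+1)))⁻¹
      = (cs.wordProd C)⁻¹ := by
    rw [hsplit]
    group
  have hvec : ρ (cs.wordProd (l.drop k)) (ρ (cs.wordProd (l.drop (m+1)))⁻¹ (e (l[m])))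
      = ρ (cs.wordProd C)⁻¹ (e (l[m])) := by
    rw [rho_rho ρ, hgrp]
  rw [hvec]
  apply pos_of_not_isRightDescent cs e BF ρ hg
  intro hdesc
  have hcons : (l[m] :: C) = (l.drop m).take (k - m) := by
    rw [List.drop_eq_getElem_cons hm, show k - m = (k - (m+1)) + 1 by omega,
      List.take_succ_cons]
  have hredC : cs.IsReduced C := CoxeterSystem.IsReduced.take (CoxeterSystem.IsReduced.drop hl (m+1)) _
  have hredmC : cs.IsReduced (l[m] :: C) := by
    rw [hcons]
    exact CoxeterSystem.IsReduced.take (CoxeterSystem.IsReduced.drop hl m) _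
  have h1 : (cs.wordProd C)⁻¹ * cs.simple (l[m]) = (cs.wordProd (l[m] :: C))⁻¹ := by
    rw [CoxeterSystem.wordProd_cons, mul_inv_rev, CoxeterSystem.inv_simple]
  have h2 : cs.length ((cs.wordProd (l[m] :: C))⁻¹) = C.length + 1 := by
    rw [cs.length_inv]
    rw [show cs.length (cs.wordProd (l[m] :: C)) = (l[m] :: C).length from hredmC]
    simp
  have h3 : cs.length ((cs.wordProd C)⁻¹) = C.length := by
    rw [cs.length_inv]
    exact hredC
  have hlt : cs.length ((cs.wordProd C)⁻¹ * cs.simple (l[m]))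
      < cs.length ((cs.wordProd C)⁻¹) := hdesc
  rw [h1, h2, h3] at hlt
  omega

theorem sign_neg (k m : ℕ) (hkm : k ≤ m) (hm : m < l.length) :
    Neg e (ρ (cs.wordProd (l.drop k)) (ρ (cs.wordProd (l.drop (m+1)))⁻¹ (e (l[m])))) := by
  set A' : List B := (l.drop k).take (m - k) with hA'
  set A : List B := (l.drop k).take (m + 1 - k) with hA
  have hAcons : A = A' ++ [l[m]] := by
    rw [hA, hA', show m + 1 - k = (m - k) + 1 by omega, List.take_succ,
      List.getElem?_drop, show k + (m - k) = m by omega,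
      List.getElem?_eq_getElem hm]
    rfl
  have hsplit : cs.wordProd (l.drop k) = cs.wordProd A * cs.wordProd (l.drop (m+1)) := by
    rw [← CoxeterSystem.wordProd_append]
    congr 1
    conv_lhs => rw [← List.take_append_drop (m + 1 - k) (l.drop k)]
    rw [List.drop_drop, show k + (m + 1 - k) = m + 1 by omega]
  have hgrp : cs.wordProd (l.drop k) * (cs.wordProd (l.drop (m+1)))⁻¹ = cs.wordProd A := by
    rw [hsplit]
    group
  have hvec : ρ (cs.wordProd (l.drop k)) (ρ (cs.wordProd (l.drop (m+1)))⁻¹ (e (l[m])))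
      = ρ (cs.wordProd A) (e (l[m])) := by
    rw [rho_rho ρ, hgrp]
  have hWA : cs.wordProd A = cs.wordProd A' * cs.simple (l[m]) := by
    rw [hAcons, CoxeterSystem.wordProd_append, CoxeterSystem.wordProd_singleton]
  have hval : ρ (cs.wordProd A) (e (l[m])) = - ρ (cs.wordProd A') (e (l[m])) := by
    rw [hWA, ← rho_rho ρ, rho_simple_self cs e BF ρ hg, map_neg]
  have hredA : cs.IsReduced A := CoxeterSystem.IsReduced.take (CoxeterSystem.IsReduced.drop hl k) _
  have hnd : ¬ cs.IsRightDescent (cs.wordProd A') (l[m]) := by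
    intro hdesc
    have h1 : cs.length (cs.wordProd A' * cs.simple (l[m])) < cs.length (cs.wordProd A') :=
      hdesc
    rw [← hWA] at h1
    have h2 : cs.length (cs.wordProd A) = A.length :=  hredA
    have h3 := cs.length_wordProd_le A'
    have h4 : A.length = (m + 1 - k) := by
      rw [hA, List.length_take, List.length_drop]
      omega
    have h5 : A'.length = m - k := by
      rw [hA', List.length_take, List.length_drop]
      omega
    omega
  have hposA' := pos_of_not_isRightDescent cs e BF ρ hg _ _ hnd
  rw [hvec, hval]
  exact pos_neg' e hposA'

theorem chain_pos {γ : V} (hγ : γ ∈ PhiPos ρ e) (hmem : γ ∉ rootSeq cs ρ e l) :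
    ∀ d k, k + d = l.length → Pos e (ρ (cs.wordProd (l.drop k)) γ) := by
  intro d
  induction d with
  | zero =>
    intro k hk
    rw [show k = l.length by omega, List.drop_length, CoxeterSystem.wordProd_nil, map_one]
    exact hγ.2
  | succ d ih =>
    intro k hk
    have hkl : k < l.length := by omega
    obtain ⟨z, r, hzr⟩ := hγ.1
    have hdropk : l.drop k = l[k] :: l.drop (k+1) := List.drop_eq_getElem_cons hkl
    have hw : cs.wordProd (l.drop k)
        = cs.simple (l[k]) * cs.wordProd (l.drop (k+1)) := by
      rw [hdropk, CoxeterSystem.wordProd_cons]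
    have hβpos : Pos e (ρ (cs.wordProd (l.drop (k+1))) γ) := ih (k+1) (by omega)
    rcases root_pos_or_neg cs e BF ρ hg (cs.wordProd (l.drop k) * z) r with hp | hn
    · have : ρ (cs.wordProd (l.drop k)) γ = ρ (cs.wordProd (l.drop k) * z) (e r) := by
        rw [hzr, rho_rho ρ]
      rw [this]
      exact hp
    · exfalso
      have hβroot : ρ (cs.wordProd (l.drop (k+1))) γ
          = ρ (cs.wordProd (l.drop (k+1)) * z) (e r) := by
        rw [hzr, rho_rho ρ]
      have hXβ : ρ (cs.wordProd (l.drop k) * z) (e r)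
          = ρ (cs.simple (l[k])) (ρ (cs.wordProd (l.drop (k+1)) * z) (e r)) := by
        rw [rho_rho ρ, ← mul_assoc, ← hw]
      have heq : ρ (cs.wordProd (l.drop (k+1)) * z) (e r) = e (l[k]) := by
        apply eq_simple_of_simple_neg cs e BF ρ hg
        · rw [← hβroot]
          exact hβpos
        · rw [← hXβ]
          exact hn
      have hγeq : γ = ρ (cs.wordProd (l.drop (k+1)))⁻¹ (e (l[k])) := by
        rw [← heq, ← rho_rho ρ, hzr]
        rw [rho_inv_apply ρ]
      have hγmem : γ ∈ rootSeq cs ρ e l := by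
        have h1 := rootSeq_getElem cs e ρ l k hkl
        rw [← hγeq] at h1
        rw [← h1]
        exact List.getElem_mem _
      exact hmem hγmem

omit hg hl in
theorem stdEncoding_le (lam : PhiPos ρ e) : stdEncoding cs ρ e l lam ≤ l.length := by
  classical
  unfold stdEncoding
  split_ifs with h
  · have h1 := List.idxOf_lt_length_iff.mpr h
    rw [rootSeq_length] at h1
    omega
  · omega

theorem pos_of_le (lam : PhiPos ρ e) (k : ℕ) (hk : k ≤ l.length)
    (h : stdEncoding cs ρ e l lam ≤ k) :
    Pos e (ρ (cs.wordProd (l.drop k)) (lam : V)) := by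
  classical
  by_cases hmem : (lam : V) ∈ rootSeq cs ρ e l
  · have hlt : (rootSeq cs ρ e l).idxOf (lam : V) < (rootSeq cs ρ e l).length :=
      List.idxOf_lt_length_iff.mpr hmem
    have hltl : (rootSeq cs ρ e l).idxOf (lam : V) < l.length := by
      rw [rootSeq_length] at hlt
      exact hlt
    have hT : stdEncoding cs ρ e l lam = (rootSeq cs ρ e l).idxOf (lam : V) + 1 := by
      unfold stdEncoding
      rw [if_pos hmem]
    have hlam : (lam : V)
        = ρ (cs.wordProd (l.drop ((rootSeq cs ρ e l).idxOf (lam : V) + 1)))⁻¹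
            (e (l[(rootSeq cs ρ e l).idxOf (lam : V)])) := by
      rw [← rootSeq_getElem cs e ρ l _ hltl]
      exact (List.getElem_idxOf hlt).symm
    rw [hlam]
    exact sign_pos cs e BF ρ hg hl k _ (by omega) hltl
  · have h0 : (lam : V) ∈ PhiPos ρ e := lam.property
    exact chain_pos cs e BF ρ hg hl h0 hmem (l.length - k) k (by omega)

theorem neg_of_lt (lam : PhiPos ρ e) (k : ℕ)
    (h : k < stdEncoding cs ρ e l lam) :
    Neg e (ρ (cs.wordProd (l.drop k)) (lam : V)) := by
  classical
  have hmem : (lam : V) ∈ rootSeq cs ρ e l := by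
    by_contra hmem
    have hT : stdEncoding cs ρ e l lam = 0 := by
      unfold stdEncoding
      rw [if_neg hmem]
    omega
  have hlt : (rootSeq cs ρ e l).idxOf (lam : V) < (rootSeq cs ρ e l).length :=
    List.idxOf_lt_length_iff.mpr hmem
  have hltl : (rootSeq cs ρ e l).idxOf (lam : V) < l.length := by
    rw [rootSeq_length] at hlt
    exact hlt
  have hT : stdEncoding cs ρ e l lam = (rootSeq cs ρ e l).idxOf (lam : V) + 1 := by
    unfold stdEncoding
    rw [if_pos hmem]
  have hlam : (lam : V)
      = ρ (cs.wordProd (l.drop ((rootSeq cs ρ e l).idxOf (lam : V) + 1)))⁻¹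
          (e (l[(rootSeq cs ρ e l).idxOf (lam : V)])) := by
    rw [← rootSeq_getElem cs e ρ l _ hltl]
    exact (List.getElem_idxOf hlt).symm
  rw [hlam]
  exact sign_neg cs e BF ρ hg hl k _ (by omega) hltl

theorem le_of_pos (lam : PhiPos ρ e) (k : ℕ)
    (h : Pos e (ρ (cs.wordProd (l.drop k)) (lam : V))) :
    stdEncoding cs ρ e l lam ≤ k := by
  by_contra hcon
  have hn := neg_of_lt cs e BF ρ hg hl lam k (by omega)
  obtain ⟨z, r, hzr⟩ := lam.property.1
  exact root_not_pos_neg cs e BF ρ hg (cs.wordProd (l.drop k) * z) r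
    (by rw [hzr, rho_rho ρ]) h hn

theorem lt_of_neg (lam : PhiPos ρ e) (k : ℕ) (hk : k ≤ l.length)
    (h : Neg e (ρ (cs.wordProd (l.drop k)) (lam : V))) :
    k < stdEncoding cs ρ e l lam := by
  classical
  by_contra hcon
  have hp := pos_of_le cs e BF ρ hg hl lam k hk (by omega)
  obtain ⟨z, r, hzr⟩ := lam.property.1
  exact root_not_pos_neg cs e BF ρ hg (cs.wordProd (l.drop k) * z) r
    (by rw [hzr, rho_rho ρ]) hp h

theorem between (α β γ : PhiPos ρ e) (a b : ℝ) (ha : 0 ≤ a) (hb : 0 ≤ b)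
    (hγ : (γ : V) = a • (α : V) + b • (β : V))
    (hT : stdEncoding cs ρ e l α ≤ stdEncoding cs ρ e l β) :
    stdEncoding cs ρ e l α ≤ stdEncoding cs ρ e l γ ∧
      stdEncoding cs ρ e l γ ≤ stdEncoding cs ρ e l β := by
  constructor
  · rcases Nat.eq_zero_or_pos (stdEncoding cs ρ e l α) with h0 | hpos
    · omega
    · set k : ℕ := stdEncoding cs ρ e l α - 1 with hkdef
      have hnα := neg_of_lt cs e BF ρ hg hl α k (by omega)
      have hnβ := neg_of_lt cs e BF ρ hg hl β k (by omega)
      have hX : ρ (cs.wordProd (l.drop k)) (γ : V)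
          = a • ρ (cs.wordProd (l.drop k)) (α : V)
            + b • ρ (cs.wordProd (l.drop k)) (β : V) := by
        rw [hγ, map_add, map_smul, map_smul]
      have hnγ : Neg e (ρ (cs.wordProd (l.drop k)) (γ : V)) := by
        rw [hX]
        exact neg_comb e hnα hnβ ha hb
      have := lt_of_neg cs e BF ρ hg hl γ k
        (by have := stdEncoding_le cs e ρ (l := l) α; omega) hnγ
      omega
  · set k : ℕ := stdEncoding cs ρ e l β with hkdef
    have hpα := pos_of_le cs e BF ρ hg hl α k (stdEncoding_le cs e ρ (l := l) β) hT
    have hpβ := pos_of_le cs e BF ρ hg hl β k (stdEncoding_le cs e ρ (l := l) β) (le_refl _)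
    have hX : ρ (cs.wordProd (l.drop k)) (γ : V)
        = a • ρ (cs.wordProd (l.drop k)) (α : V)
          + b • ρ (cs.wordProd (l.drop k)) (β : V) := by
      rw [hγ, map_add, map_smul, map_smul]
    have hpγ : Pos e (ρ (cs.wordProd (l.drop k)) (γ : V)) := by
      rw [hX]
      exact pos_comb e hpα hpβ ha hb
    exact le_of_pos cs e BF ρ hg hl γ k hpγ

end RootSeq

end StdEnc

/-- If `x` is a reduced expression for `w`, then the standard encoding `T_x`
is a standard labeling of `Φ⁺`. -/
theorem stdEncoding_isStandard
    {M : CoxeterMatrix B} (cs : CoxeterSystem M W) (e : Module.Basis B ℝ V)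
    (BF : LinearMap.BilinForm ℝ V) (ρ : W →* V →ₗ[ℝ] V)
    (hgeo : IsGeometricRep cs e BF ρ)
    (l : List B) (w : W) (hred : cs.IsReduced l) (hw : cs.wordProd l = w) :
    IsStandardLabeling ρ e (stdEncoding cs ρ e l) := by
  intro α β γ a b hne ha hb hγ
  rcases le_total (stdEncoding cs ρ e l α) (stdEncoding cs ρ e l β) with h | h
  · exact Or.inl (StdEnc.between cs e BF ρ hgeo hred α β γ a b ha hb hγ h)
  · exact Or.inr (StdEnc.between cs e BF ρ hgeo hred β α γ b a hb ha
      (by rw [hγ, add_comm]) h)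
end

section
/- Let (W,S) be a Coxeter system and w ∈ W, and let s_1 ⋯ s_k be a reduced expression for w. Then w is fully covering (i.e. the number of reflections t with ℓ(wt) = ℓ(w) − 1 equals ℓ(w)) if and only if for every i with 1 ≤ i ≤ k, the expression s_1 ⋯ ŝ_i ⋯ s_k obtained by omitting s_i is reduced. -/
namespace StrongExchangeAux

open CoxeterSystem List

attribute [local instance] Classical.propDecidable

/-- Solve `x * t * y = c` for `t`. -/
lemma conj_eq_iff {G : Type*} [Group G] (x y c t : G) :
    x * t * y = c ↔ t = x⁻¹ * c * y⁻¹ := by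
  constructor
  · intro h; rw [← h]; group
  · intro h; rw [h]; group

lemma aux_semiconj {G : Type*} [Group G] {a b : G} (ha : a⁻¹ = a) (hb : b⁻¹ = b) :
    SemiconjBy b (a * b) (a * b)⁻¹ := by
  unfold SemiconjBy
  rw [mul_inv_rev, ha, hb, ← mul_assoc]

lemma aux_fst {G : Type*} [Group G] {a b : G} (ha : a⁻¹ = a) (hb : b⁻¹ = b) (n : ℕ) (t : G) :
    a * (b * ((a * b) ^ n * t * ((a * b) ^ n)⁻¹) * b) * a
      = (a * b) ^ (n + 1) * t * ((a * b) ^ (n + 1))⁻¹ := by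
  have hba : b * a = ((a * b) : G)⁻¹ := by rw [mul_inv_rev, ha, hb]
  have h1 : ((a * b) : G) ^ (n + 1) = a * b * (a * b) ^ n := by rw [pow_succ']
  have h2 : (((a * b) : G) ^ (n + 1))⁻¹ = ((a * b) ^ n)⁻¹ * (b * a) := by
    rw [pow_succ', mul_inv_rev, mul_inv_rev, ha, hb, ← mul_assoc]
  rw [h2, h1]
  simp only [mul_assoc]

lemma aux_c1 {G : Type*} [Group G] {a b : G} (ha : a⁻¹ = a) (hb : b⁻¹ = b) (n : ℕ) :
    ((a * b) ^ n)⁻¹ * b * (((a * b) ^ n)⁻¹)⁻¹ = ((a * b)⁻¹) ^ (2 * n) * b := by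
  have hbx : b * (a * b) ^ n = ((a * b)⁻¹) ^ n * b := (aux_semiconj ha hb).pow_right n
  rw [inv_inv, mul_assoc, hbx, ← inv_pow, ← mul_assoc, ← pow_add, two_mul]

lemma aux_c2 {G : Type*} [Group G] {a b : G} (ha : a⁻¹ = a) (hb : b⁻¹ = b) (n : ℕ) :
    (b * (a * b) ^ n)⁻¹ * a * (((a * b) ^ n)⁻¹ * b)⁻¹ = ((a * b)⁻¹) ^ (2 * n + 1) * b := by
  have hbx : ∀ r : G, b * ((a * b) ^ n * r) = ((a * b)⁻¹) ^ n * (b * r) := by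
    intro r
    rw [← mul_assoc, (aux_semiconj ha hb).pow_right n, mul_assoc]
  have hba : ∀ r : G, b * (a * r) = ((a * b) : G)⁻¹ * r := by
    intro r
    rw [← mul_assoc, show b * a = ((a * b) : G)⁻¹ by rw [mul_inv_rev, ha, hb]]
  have hbx0 : b * (a * b) ^ n = ((a * b)⁻¹) ^ n * b := (aux_semiconj ha hb).pow_right n
  have hba0 : b * a = ((a * b) : G)⁻¹ := by rw [mul_inv_rev, ha, hb]
  rw [mul_inv_rev, mul_inv_rev, hb, inv_inv, ← inv_pow]
  rw [mul_assoc (((a * b)⁻¹ : G) ^ n * b) a, hbx0]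
  rw [show ((a * b)⁻¹ : G) ^ n * b * (a * (((a * b)⁻¹) ^ n * b))
      = ((a * b)⁻¹) ^ n * ((b * a) * (((a * b)⁻¹) ^ n * b)) from by simp only [mul_assoc]]
  rw [hba0, ← mul_assoc, ← pow_succ, ← mul_assoc, ← pow_add,
    show n + 1 + n = 2 * n + 1 from by ring]

lemma aux_iff1 {G : Type*} [Group G] {a b : G} (ha : a⁻¹ = a) (hb : b⁻¹ = b) (n : ℕ) (t : G) :
    ((a * b) ^ n * t * ((a * b) ^ n)⁻¹ = b) ↔ (t = ((a * b)⁻¹) ^ (2 * n) * b) := by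
  rw [conj_eq_iff, aux_c1 ha hb n]

lemma aux_iff2 {G : Type*} [Group G] {a b : G} (ha : a⁻¹ = a) (hb : b⁻¹ = b) (n : ℕ) (t : G) :
    (b * ((a * b) ^ n * t * ((a * b) ^ n)⁻¹) * b = a) ↔
      (t = ((a * b)⁻¹) ^ (2 * n + 1) * b) := by
  rw [show b * ((a * b) ^ n * t * ((a * b) ^ n)⁻¹) * b
      = (b * (a * b) ^ n) * t * (((a * b) ^ n)⁻¹ * b) from by group,
    conj_eq_iff, aux_c2 ha hb n]

variable {B : Type*} {W : Type*} [Group W] {M : CoxeterMatrix B} (cs : CoxeterSystem M W)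

/-- The underlying function of the reflection representation permutation. -/
noncomputable def seFun (i : B) : W × ZMod 2 → W × ZMod 2 :=
  fun x => (cs.simple i * x.1 * cs.simple i, x.2 + if x.1 = cs.simple i then 1 else 0)

lemma seFun_involutive (i : B) : Function.Involutive (seFun cs i) := by
  rintro ⟨t, ε⟩
  unfold seFun
  have h1 : cs.simple i * (cs.simple i * t * cs.simple i) * cs.simple i = t := by
    rw [← mul_assoc, ← mul_assoc, cs.simple_mul_simple_self, one_mul, mul_assoc,
      cs.simple_mul_simple_self, mul_one]
  have h2 : (cs.simple i * t * cs.simple i = cs.simple i) ↔ (t = cs.simple i) := by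
    constructor
    · intro h
      have := congrArg (fun x => cs.simple i * x * cs.simple i) h
      rw [h1] at this
      rw [this, cs.simple_mul_simple_self, one_mul]
    · rintro rfl
      rw [cs.simple_mul_simple_self, one_mul]
  simp only [h1, h2]
  split_ifs with h
  · simp [add_assoc, CharTwo.add_self_eq_zero]
  · simp

/-- The permutation of `W × ZMod 2` attached to a simple generator. -/
noncomputable def sePerm (i : B) : Equiv.Perm (W × ZMod 2) :=
  (seFun_involutive cs i).toPerm

lemma sePerm_apply (i : B) (x : W × ZMod 2) : sePerm cs i x = seFun cs i x := rfl

lemma sePerm_pow_apply (i j : B) (n : ℕ) (t : W) (ε : ZMod 2) :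
    ((sePerm cs i * sePerm cs j) ^ n) (t, ε) =
      ((cs.simple i * cs.simple j) ^ n * t * ((cs.simple i * cs.simple j) ^ n)⁻¹,
        ε + ∑ k ∈ Finset.range (2 * n),
          (if t = ((cs.simple i * cs.simple j)⁻¹) ^ k * cs.simple j then 1 else 0)) := by
  have ha : (cs.simple i)⁻¹ = cs.simple i := cs.inv_simple i
  have hb : (cs.simple j)⁻¹ = cs.simple j := cs.inv_simple j
  induction n with
  | zero => simp
  | succ n ih =>
    rw [pow_succ', Equiv.Perm.mul_apply, ih, Equiv.Perm.mul_apply,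
      sePerm_apply cs j, sePerm_apply cs i]
    unfold seFun
    simp only
    rw [show 2 * (n + 1) = 2 * n + 1 + 1 from by ring, Finset.sum_range_succ,
      Finset.sum_range_succ]
    refine Prod.ext ?_ ?_
    · simp only
      exact aux_fst ha hb n t
    · simp only
      rw [if_congr (aux_iff1 ha hb n t) rfl rfl, if_congr (aux_iff2 ha hb n t) rfl rfl]
      ring

lemma seLiftable : M.IsLiftable (fun i => sePerm cs i) := by
  intro i j
  apply Equiv.ext
  rintro ⟨t, ε⟩
  show ((sePerm cs i * sePerm cs j) ^ M i j) (t, ε) = (1 : Equiv.Perm (W × ZMod 2)) (t, ε)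
  rw [Equiv.Perm.one_apply]
  rw [sePerm_pow_apply]
  have hq : (cs.simple i * cs.simple j) ^ M i j = 1 := cs.simple_mul_simple_pow i j
  have hc : ((cs.simple i * cs.simple j)⁻¹) ^ M i j = 1 := by
    rw [inv_pow, hq, inv_one]
  have hsum : (∑ k ∈ Finset.range (2 * M i j),
      (if t = ((cs.simple i * cs.simple j)⁻¹) ^ k * cs.simple j then (1 : ZMod 2) else 0)) = 0 := by
    rw [two_mul, Finset.sum_range_add]
    have heq : ∀ k,
        (if t = ((cs.simple i * cs.simple j)⁻¹) ^ (M i j + k) * cs.simple j then (1 : ZMod 2) else 0)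
          = (if t = ((cs.simple i * cs.simple j)⁻¹) ^ k * cs.simple j then (1 : ZMod 2) else 0) := by
      intro k
      rw [pow_add, hc, one_mul]
    rw [Finset.sum_congr rfl (fun k _ => heq k)]
    exact CharTwo.add_self_eq_zero _
  rw [hq, hsum]
  simp

/-- The reflection representation homomorphism. -/
noncomputable def sePhi : W →* Equiv.Perm (W × ZMod 2) :=
  cs.lift ⟨fun i => sePerm cs i, seLiftable cs⟩

lemma sePhi_simple (i : B) : sePhi cs (cs.simple i) = sePerm cs i :=
  cs.lift_apply_simple (seLiftable cs) i

lemma rightInvSeq_cons (i : B) (ω : List B) :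
    cs.rightInvSeq (i :: ω) =
      ((cs.wordProd ω)⁻¹ * cs.simple i * cs.wordProd ω) :: cs.rightInvSeq ω := rfl

lemma sePhi_wordProd (ω : List B) (t : W) (ε : ZMod 2) :
    sePhi cs (cs.wordProd ω) (t, ε) =
      (cs.wordProd ω * t * (cs.wordProd ω)⁻¹,
        ε + (((cs.rightInvSeq ω).count t : ℕ) : ZMod 2)) := by
  induction ω with
  | nil => simp [wordProd_nil]
  | cons i ω ih =>
    rw [wordProd_cons, map_mul, Equiv.Perm.mul_apply, ih, sePhi_simple, sePerm_apply]
    unfold seFun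
    simp only
    rw [rightInvSeq_cons, List.count_cons]
    refine Prod.ext ?_ ?_
    · simp only
      rw [mul_inv_rev, cs.inv_simple]
      group
    · simp only
      have hiff : (cs.wordProd ω * t * (cs.wordProd ω)⁻¹ = cs.simple i) ↔
          ((cs.wordProd ω)⁻¹ * cs.simple i * cs.wordProd ω == t) = true := by
        rw [beq_iff_eq, conj_eq_iff, inv_inv, eq_comm]
      rw [if_congr hiff rfl rfl]
      push_cast
      split_ifs <;> ring

lemma sePhi_apply (w t : W) (ε : ZMod 2) :
    sePhi cs w (t, ε) = (w * t * w⁻¹, ε + (sePhi cs w (t, 0)).2) := by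
  obtain ⟨ω, -, rfl⟩ := cs.exists_reduced_word' w
  rw [sePhi_wordProd, sePhi_wordProd]
  simp

lemma sePhi_snd_conj (j : B) (u : W) :
    (sePhi cs (cs.simple j * u * cs.simple j) (cs.simple j * u * cs.simple j, 0)).2
      = (sePhi cs u (u, 0)).2 := by
  have hb : (cs.simple j)⁻¹ = cs.simple j := cs.inv_simple j
  have hmul : sePhi cs (cs.simple j * u * cs.simple j)
      = sePhi cs (cs.simple j) * sePhi cs u * sePhi cs (cs.simple j) := by
    rw [← map_mul, ← map_mul]
  rw [hmul, Equiv.Perm.mul_apply, Equiv.Perm.mul_apply, sePhi_simple, sePerm_apply]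
  have h1 : seFun cs j (cs.simple j * u * cs.simple j, 0)
      = (u, if u = cs.simple j then 1 else 0) := by
    unfold seFun
    refine Prod.ext ?_ ?_
    · simp only
      rw [show cs.simple j * (cs.simple j * u * cs.simple j) * cs.simple j
          = (cs.simple j * cs.simple j) * u * (cs.simple j * cs.simple j) from by group,
        cs.simple_mul_simple_self, one_mul, mul_one]
    · simp only
      rw [zero_add]
      congr 1
      rw [eq_iff_iff]
      constructor
      · intro h
        have := congrArg (fun x => cs.simple j * x * cs.simple j) h
        rw [show cs.simple j * (cs.simple j * u * cs.simple j) * cs.simple j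
            = (cs.simple j * cs.simple j) * u * (cs.simple j * cs.simple j) from by group,
          cs.simple_mul_simple_self, one_mul, mul_one] at this
        rw [this]
        exact one_mul _
      · rintro rfl
        rw [cs.simple_mul_simple_self, one_mul]
  rw [sePerm_apply cs j (cs.simple j * u * cs.simple j, 0), h1, sePhi_apply]
  unfold seFun
  simp only
  rw [show u * u * u⁻¹ = u from by group]
  rw [add_comm (if u = cs.simple j then (1 : ZMod 2) else 0) ((sePhi cs u (u, 0)).2),
    add_assoc, CharTwo.add_self_eq_zero, add_zero]

lemma sePhi_refl_snd {t : W} (ht : cs.IsReflection t) :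
    (sePhi cs t (t, 0)).2 = 1 := by
  obtain ⟨v, i, rfl⟩ := ht
  obtain ⟨ω, -, rfl⟩ := cs.exists_reduced_word' v
  induction ω with
  | nil =>
    rw [wordProd_nil, one_mul, inv_one, mul_one, sePhi_simple, sePerm_apply]
    unfold seFun
    simp
  | cons j ω ih =>
    rw [wordProd_cons]
    rw [show cs.simple j * cs.wordProd ω * cs.simple i * (cs.simple j * cs.wordProd ω)⁻¹
        = cs.simple j * (cs.wordProd ω * cs.simple i * (cs.wordProd ω)⁻¹) * cs.simple j from by
      rw [mul_inv_rev, cs.inv_simple]; group]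
    rw [sePhi_snd_conj]
    exact ih

lemma rightInvSeq_append (α γ : List B) :
    cs.rightInvSeq (α ++ γ) =
      ((cs.rightInvSeq α).map fun r => (cs.wordProd γ)⁻¹ * r * cs.wordProd γ)
        ++ cs.rightInvSeq γ := by
  induction α with
  | nil => simp
  | cons a α ih =>
    rw [cons_append, rightInvSeq_cons, rightInvSeq_cons, ih, map_cons, cons_append]
    congr 1
    rw [wordProd_append, mul_inv_rev]
    group

/-- **Strong exchange property.** -/
theorem strong_exchange (ω : List B) {t : W} (ht : cs.IsReflection t)
    (hl : cs.length (cs.wordProd ω * t) < cs.length (cs.wordProd ω)) :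
    t ∈ cs.rightInvSeq ω := by
  have htinv : t⁻¹ = t := ht.inv
  have htt : t * t = 1 := ht.mul_self
  obtain ⟨v, i, hvit⟩ := ht
  obtain ⟨ωv, -, hv⟩ := cs.exists_reduced_word' v
  have hγ : cs.wordProd (ωv ++ i :: ωv.reverse) = t := by
    rw [wordProd_append, wordProd_cons, wordProd_reverse, hvit, hv, ← mul_assoc]
  set γ := ωv ++ i :: ωv.reverse with hγdef
  obtain ⟨α, hαred, hα⟩ := cs.exists_reduced_word' (cs.wordProd ω * t)
  have hαγ : cs.wordProd (α ++ γ) = cs.wordProd ω := by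
    rw [wordProd_append, hγ, ← hα, mul_assoc, htt, mul_one]
  have e1 := sePhi_wordProd cs (α ++ γ) t 0
  rw [hαγ] at e1
  have e2 := sePhi_wordProd cs ω t 0
  have hpar : (((cs.rightInvSeq (α ++ γ)).count t : ℕ) : ZMod 2)
      = (((cs.rightInvSeq ω).count t : ℕ) : ZMod 2) := by
    have h3 := congrArg Prod.snd (e1.symm.trans e2)
    simpa using h3
  have hrefl : cs.IsReflection t := ⟨v, i, hvit⟩
  have htγ : (((cs.rightInvSeq γ).count t : ℕ) : ZMod 2) = 1 := by
    have e3 := sePhi_wordProd cs γ t 0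
    rw [hγ] at e3
    have h4 := congrArg Prod.snd e3
    rw [sePhi_refl_snd cs hrefl] at h4
    simpa using h4.symm
  have htα : (cs.rightInvSeq α).count t = 0 := by
    rw [List.count_eq_zero]
    intro hmem
    have h5 := (cs.isRightInversion_of_mem_rightInvSeq hαred hmem).2
    rw [← hα, mul_assoc, htt, mul_one] at h5
    omega
  have hcnt : (((cs.rightInvSeq ω).count t : ℕ) : ZMod 2) = 1 := by
    rw [← hpar, rightInvSeq_append, List.count_append]
    have hinj : Function.Injective (fun r : W => (cs.wordProd γ)⁻¹ * r * cs.wordProd γ) := by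
      intro r r' h
      simp only at h
      have := congrArg (fun x => (cs.wordProd γ) * x * (cs.wordProd γ)⁻¹) h
      group at this
      exact this
    have harg : (cs.wordProd γ)⁻¹ * t * cs.wordProd γ = t := by
      rw [hγ, inv_mul_cancel, one_mul]
    have h6 : ((cs.rightInvSeq α).map
          fun r => (cs.wordProd γ)⁻¹ * r * cs.wordProd γ).count
            ((fun r : W => (cs.wordProd γ)⁻¹ * r * cs.wordProd γ) t)
        = (cs.rightInvSeq α).count t :=
      List.count_map_of_injective _ _ hinj t
    simp only at h6
    rw [harg] at h6
    have hmap := h6.trans htα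
    rw [hmap]
    push_cast
    rw [htγ]
    ring
  by_contra hmem
  rw [List.count_eq_zero_of_not_mem hmem] at hcnt
  simp at hcnt

end StrongExchangeAux

/-- Let `s_1 ⋯ s_k` be a reduced expression for `w`.  Then `w` is fully
covering (the number of reflections `t` with `ℓ(wt) = ℓ(w) − 1` equals `ℓ(w)`) if and only
if omitting any single letter from the reduced expression yields a reduced expression. -/
theorem fullyCovering_iff_eraseIdx_reduced
    {B : Type*} {W : Type*} [Group W] {M : CoxeterMatrix B} (cs : CoxeterSystem M W)
    (w : W) (l : List B) (hred : cs.IsReduced l) (hw : cs.wordProd l = w) :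
    Set.ncard {t : W | cs.IsReflection t ∧ cs.length (w * t) + 1 = cs.length w}
        = cs.length w ↔
      ∀ i : ℕ, i < l.length → cs.IsReduced (l.eraseIdx i) := by
  classical
  have hlen : cs.length w = l.length := by rw [← hw]; exact hred
  have hTnodup : (cs.rightInvSeq l).Nodup := hred.nodup_rightInvSeq
  have hTlen : (cs.rightInvSeq l).length = l.length := cs.length_rightInvSeq l
  set A := {t : W | cs.IsReflection t ∧ cs.length (w * t) + 1 = cs.length w} with hA
  have hsub : A ⊆ {t | t ∈ cs.rightInvSeq l} := by
    rintro t ⟨ht, hlt⟩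
    have h1 : cs.length (cs.wordProd l * t) < cs.length (cs.wordProd l) := by
      rw [hw]; omega
    exact StrongExchangeAux.strong_exchange cs l ht h1
  have hset : {t : W | t ∈ cs.rightInvSeq l} = ↑(cs.rightInvSeq l).toFinset := by
    ext x; simp
  have hncardT : Set.ncard {t : W | t ∈ cs.rightInvSeq l} = cs.length w := by
    rw [hset, Set.ncard_coe_finset, List.toFinset_card_of_nodup hTnodup, hTlen, hlen]
  have herase : ∀ i, i < l.length →
      cs.wordProd (l.eraseIdx i) = w * (cs.rightInvSeq l).getD i 1 := by
    intro i hi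
    rw [← hw]
    exact (cs.wordProd_mul_getD_rightInvSeq l i).symm
  constructor
  · intro hcard i hi
    have hfin : Set.Finite {t : W | t ∈ cs.rightInvSeq l} := by
      rw [hset]; exact (cs.rightInvSeq l).toFinset.finite_toSet
    have hAeq : A = {t | t ∈ cs.rightInvSeq l} :=
      Set.eq_of_subset_of_ncard_le hsub (by rw [hncardT, hcard]) hfin
    have hi' : i < (cs.rightInvSeq l).length := by omega
    have hmemT : (cs.rightInvSeq l).getD i 1 ∈ cs.rightInvSeq l := by
      rw [List.getD_eq_getElem _ 1 hi']
      exact List.getElem_mem hi'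
    have hmemA : (cs.rightInvSeq l).getD i 1 ∈ A := by rw [hAeq]; exact hmemT
    obtain ⟨-, hlt⟩ := hmemA
    show cs.length (cs.wordProd (l.eraseIdx i)) = (l.eraseIdx i).length
    rw [herase i hi]
    have hel : (l.eraseIdx i).length + 1 = l.length := List.length_eraseIdx_add_one hi
    omega
  · intro hrd
    have hAeq : A = {t | t ∈ cs.rightInvSeq l} := by
      apply Set.Subset.antisymm hsub
      intro t htT
      obtain ⟨i, hi', hti⟩ := List.mem_iff_getElem.mp htT
      have hi : i < l.length := by omega
      have htd : (cs.rightInvSeq l).getD i 1 = t := by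
        rw [List.getD_eq_getElem _ 1 hi', hti]
      refine ⟨cs.isReflection_of_mem_rightInvSeq l htT, ?_⟩
      have h1 : cs.length (w * t) = (l.eraseIdx i).length := by
        rw [← htd, ← herase i hi]
        exact hrd i hi
      have hel : (l.eraseIdx i).length + 1 = l.length := List.length_eraseIdx_add_one hi
      omega
    rw [hAeq, hncardT]
end
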